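/- arXiv:2102.12389 — 5 statements merged into one kernel-verified Lean document; each statement's English description precedes it below -/
import Mathlib

section
/- Let ω be a measurable subset of ℝ^d. Then the set of points of density 1 for ω, minus the closure of the essential boundary of ω, equals the topological interior of the set of points of density 1 for ω. -/
open MeasureTheory Metric Filter Set
open scoped RealInnerProductSpace Topology ENNReal symmDiff

/-- The set of points at which the measurable set `ω` has `d`-dimensional density `t`. -/
noncomputable def densityPts {d : ℕ} (ω : Set (EuclideanSpace ℝ (Fin d))) (t : ℝ≥0∞) :
    Set (EuclideanSpace ℝ (Fin d)) :=
  {x | Filter.Tendsto (fun ρ : ℝ => volume (ω ∩ Metric.ball x ρ) / volume (Metric.ball x ρ))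
    (nhdsWithin 0 (Set.Ioi 0)) (nhds t)}

/-- `ω` has strictly positive upper `d`-dimensional density at `x`. -/
def posUpperDensity {d : ℕ} (ω : Set (EuclideanSpace ℝ (Fin d)))
    (x : EuclideanSpace ℝ (Fin d)) : Prop :=
  0 < Filter.limsup (fun ρ : ℝ => volume (ω ∩ Metric.ball x ρ) / volume (Metric.ball x ρ))
    (nhdsWithin 0 (Set.Ioi 0))

/-- The essential boundary of `ω`: points where both `ω` and its complement have
strictly positive upper density. -/
def essBoundary {d : ℕ} (ω : Set (EuclideanSpace ℝ (Fin d))) :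
    Set (EuclideanSpace ℝ (Fin d)) :=
  {x | posUpperDensity ω x ∧ posUpperDensity ωᶜ x}

namespace Stmt0Aux
variable {d : ℕ}
local notation "E" => EuclideanSpace ℝ (Fin d)

lemma volB (x : E) {ρ : ℝ} (hρ : 0 < ρ) :
    volume (ball x ρ) = ENNReal.ofReal (ρ ^ d) * volume (ball (0 : E) 1) := by
  rw [Measure.addHaar_ball_of_pos volume x hρ, finrank_euclideanSpace_fin]

lemma volB_ne_zero (x : E) {ρ : ℝ} (hρ : 0 < ρ) : volume (ball x ρ) ≠ 0 :=
  (measure_ball_pos _ _ hρ).ne'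

lemma volB_ne_top (x : E) (ρ : ℝ) : volume (ball x ρ) ≠ ⊤ := measure_ball_lt_top.ne

lemma ratio_le_one (ω : Set E) (x : E) (ρ : ℝ) :
    volume (ω ∩ ball x ρ) / volume (ball x ρ) ≤ 1 :=
  ENNReal.div_le_of_le_mul (by rw [one_mul]; exact measure_mono inter_subset_right)

lemma ratio_add {ω : Set E} (hω : MeasurableSet ω) (x : E) {ρ : ℝ} (hρ : 0 < ρ) :
    volume (ω ∩ ball x ρ) / volume (ball x ρ)
      + volume (ωᶜ ∩ ball x ρ) / volume (ball x ρ) = 1 := by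
  rw [ENNReal.div_add_div_same]
  have h : volume (ω ∩ ball x ρ) + volume (ωᶜ ∩ ball x ρ) = volume (ball x ρ) := by
    have := measure_inter_add_diff (μ := volume) (ball x ρ) hω
    rwa [inter_comm, diff_eq, inter_comm _ ωᶜ] at this
  rw [h, ENNReal.div_self (volB_ne_zero x hρ) (volB_ne_top x ρ)]

lemma tendsto_one_iff_compl {ω : Set E} (hω : MeasurableSet ω) (x : E) :
    Tendsto (fun ρ : ℝ => volume (ω ∩ ball x ρ) / volume (ball x ρ)) (𝓝[>] 0) (𝓝 1) ↔
    Tendsto (fun ρ : ℝ => volume (ωᶜ ∩ ball x ρ) / volume (ball x ρ)) (𝓝[>] 0) (𝓝 0) := by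
  constructor
  · intro h
    have he : (fun ρ : ℝ => 1 - volume (ω ∩ ball x ρ) / volume (ball x ρ))
        =ᶠ[𝓝[>] (0:ℝ)] fun ρ : ℝ => volume (ωᶜ ∩ ball x ρ) / volume (ball x ρ) := by
      filter_upwards [eventually_mem_nhdsWithin] with ρ (hρ : ρ ∈ Ioi 0)
      exact (ENNReal.eq_sub_of_add_eq
        (ne_top_of_le_ne_top ENNReal.one_ne_top (ratio_le_one ω x ρ))
        (by rw [add_comm]; exact ratio_add hω x hρ)).symm
    have := (ENNReal.Tendsto.sub ((tendsto_const_nhds : Tendsto _ _ (𝓝 (1:ℝ≥0∞)))) h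
      (Or.inl ENNReal.one_ne_top)).congr' he
    simpa using this
  · intro h
    have he : (fun ρ : ℝ => 1 - volume (ωᶜ ∩ ball x ρ) / volume (ball x ρ))
        =ᶠ[𝓝[>] (0:ℝ)] fun ρ : ℝ => volume (ω ∩ ball x ρ) / volume (ball x ρ) := by
      filter_upwards [eventually_mem_nhdsWithin] with ρ (hρ : ρ ∈ Ioi 0)
      exact (ENNReal.eq_sub_of_add_eq
        (ne_top_of_le_ne_top ENNReal.one_ne_top (ratio_le_one ωᶜ x ρ))
        (ratio_add hω x hρ)).symm
    have := (ENNReal.Tendsto.sub ((tendsto_const_nhds : Tendsto _ _ (𝓝 (1:ℝ≥0∞)))) h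
      (Or.inl ENNReal.one_ne_top)).congr' he
    simpa using this

lemma sphere_null (x : E) {ρ : ℝ} (hρ : ρ ≠ 0) : volume (sphere x ρ) = 0 :=
  Measure.addHaar_sphere_of_ne_zero volume x hρ

lemma inter_closedBall_eq {s : Set E} (x : E) {ρ : ℝ} (hρ : 0 < ρ) :
    volume (s ∩ closedBall x ρ) = volume (s ∩ ball x ρ) := by
  refine le_antisymm ?_ (measure_mono (inter_subset_inter_right _ ball_subset_closedBall))
  calc volume (s ∩ closedBall x ρ) ≤ volume ((s ∩ ball x ρ) ∪ sphere x ρ) := by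
        refine measure_mono fun z hz => ?_
        rcases hz with ⟨hzs, hzc⟩
        rcases eq_or_lt_of_le (mem_closedBall.mp hzc) with h | h
        · exact Or.inr h
        · exact Or.inl ⟨hzs, h⟩
    _ ≤ volume (s ∩ ball x ρ) + volume (sphere x ρ) := measure_union_le _ _
    _ = volume (s ∩ ball x ρ) := by rw [sphere_null x hρ.ne', add_zero]

lemma closedBall_ratio_eq {s : Set E} (x : E) {ρ : ℝ} (hρ : 0 < ρ) :
    volume (s ∩ closedBall x ρ) / volume (closedBall x ρ)
      = volume (s ∩ ball x ρ) / volume (ball x ρ) := by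
  rw [inter_closedBall_eq x hρ]
  congr 1
  have := inter_closedBall_eq (s := univ) x hρ
  simpa using this

lemma ae_density {ω : Set E} (hω : MeasurableSet ω) :
    ∀ᵐ x : E, (x ∈ ω → x ∈ densityPts ω 1) ∧ (x ∉ ω → x ∈ densityPts ω 0) := by
  filter_upwards [Besicovitch.ae_tendsto_measure_inter_div_of_measurableSet volume hω] with x hx
  have hcongr : (fun ρ : ℝ => volume (ω ∩ closedBall x ρ) / volume (closedBall x ρ))
      =ᶠ[𝓝[>] (0:ℝ)] fun ρ : ℝ => volume (ω ∩ ball x ρ) / volume (ball x ρ) := by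
    filter_upwards [eventually_mem_nhdsWithin] with ρ (hρ : ρ ∈ Ioi 0)
    exact closedBall_ratio_eq x hρ
  constructor
  · intro hmem
    have h1 : ω.indicator (1 : E → ℝ≥0∞) x = 1 := by simp [indicator_of_mem hmem]
    simpa [densityPts, h1] using hx.congr' hcongr
  · intro hmem
    have h1 : ω.indicator (1 : E → ℝ≥0∞) x = 0 := by simp [indicator_of_notMem hmem]
    simpa [densityPts, h1] using hx.congr' hcongr

lemma tendsto_zero_of_not_pos {ω : Set E} {x : E} (h : ¬ posUpperDensity ω x) :
    Tendsto (fun ρ : ℝ => volume (ω ∩ ball x ρ) / volume (ball x ρ)) (𝓝[>] 0) (𝓝 0) := by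
  unfold posUpperDensity at h
  have h0 : limsup (fun ρ : ℝ => volume (ω ∩ ball x ρ) / volume (ball x ρ)) (𝓝[>] (0:ℝ)) = 0 :=
    le_antisymm (not_lt.mp h) zero_le
  refine tendsto_of_liminf_eq_limsup ?_ h0
  exact le_antisymm (le_trans liminf_le_limsup h0.le) zero_le

lemma cont_vol (ω : Set E) {τ : ℝ} (hτ : 0 < τ) :
    Continuous fun y : E => volume (ω ∩ ball y τ) := by
  rw [continuous_iff_continuousAt]
  intro y₀
  have hc : volume (ball (0:E) 1) ≠ ⊤ := volB_ne_top _ _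
  set c := volume (ball (0:E) 1) with hcdef
  have key : ∀ a b : E, volume (ω ∩ ball a τ) ≤ volume (ω ∩ ball b τ)
      + (ENNReal.ofReal ((τ + dist a b) ^ d) * c - ENNReal.ofReal (τ ^ d) * c) := by
    intro a b
    have hd : (0:ℝ) ≤ dist a b := dist_nonneg
    have hsub : ω ∩ ball a τ ⊆ (ω ∩ ball b τ) ∪ (ball b (τ + dist a b) \ ball b τ) := by
      intro z hz
      by_cases hzb : z ∈ ball b τ
      · exact Or.inl ⟨hz.1, hzb⟩
      · refine Or.inr ⟨?_, hzb⟩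
        have h1 : dist z b ≤ dist z a + dist a b := dist_triangle z a b
        have hza : dist z a < τ := mem_ball.mp hz.2
        exact mem_ball.mpr (by linarith)
    refine le_trans (le_trans (measure_mono hsub) (measure_union_le _ _)) (add_le_add le_rfl ?_)
    rw [measure_diff (ball_subset_ball (by linarith)) measurableSet_ball.nullMeasurableSet
      (volB_ne_top b τ), volB b hτ, volB b (by linarith : (0:ℝ) < τ + dist a b)]
  set D : E → ℝ≥0∞ := fun y => ENNReal.ofReal ((τ + dist y y₀) ^ d) * c
      - ENNReal.ofReal (τ ^ d) * c with hDdef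
  have hD0 : Tendsto D (𝓝 y₀) (𝓝 0) := by
    have hreal : Tendsto (fun y : E => ENNReal.ofReal ((τ + dist y y₀) ^ d))
        (𝓝 y₀) (𝓝 (ENNReal.ofReal (τ ^ d))) := by
      have hcont : Continuous fun y : E => ENNReal.ofReal ((τ + dist y y₀) ^ d) :=
        ENNReal.continuous_ofReal.comp ((continuous_const.add
          (continuous_id.dist continuous_const)).pow d)
      have := hcont.tendsto y₀
      simpa using this
    have h1 : Tendsto (fun y : E => ENNReal.ofReal ((τ + dist y y₀) ^ d) * c)
        (𝓝 y₀) (𝓝 (ENNReal.ofReal (τ ^ d) * c)) :=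
      ENNReal.Tendsto.mul_const hreal (Or.inr hc)
    have := ENNReal.Tendsto.sub h1
      (tendsto_const_nhds : Tendsto _ _ (𝓝 (ENNReal.ofReal (τ ^ d) * c)))
      (Or.inr (ENNReal.mul_ne_top ENNReal.ofReal_ne_top hc))
    simpa [hDdef] using this
  have hfin : volume (ω ∩ ball y₀ τ) ≠ ⊤ :=
    ne_top_of_le_ne_top (volB_ne_top y₀ τ) (measure_mono inter_subset_right)
  have hub : ∀ y : E, volume (ω ∩ ball y τ) ≤ volume (ω ∩ ball y₀ τ) + D y := fun y => key y y₀
  have hlb : ∀ y : E, volume (ω ∩ ball y₀ τ) - D y ≤ volume (ω ∩ ball y τ) := by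
    intro y
    refine tsub_le_iff_right.mpr ?_
    have := key y₀ y
    rwa [dist_comm y₀ y] at this
  have hl : Tendsto (fun y : E => volume (ω ∩ ball y₀ τ) - D y) (𝓝 y₀)
      (𝓝 (volume (ω ∩ ball y₀ τ))) := by
    have := ENNReal.Tendsto.sub
      (tendsto_const_nhds : Tendsto _ _ (𝓝 (volume (ω ∩ ball y₀ τ)))) hD0 (Or.inl hfin)
    simpa using this
  have hu : Tendsto (fun y : E => volume (ω ∩ ball y₀ τ) + D y) (𝓝 y₀)
      (𝓝 (volume (ω ∩ ball y₀ τ))) := by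
    have := Tendsto.add
      (tendsto_const_nhds : Tendsto _ _ (𝓝 (volume (ω ∩ ball y₀ τ)))) hD0
    simpa using this
  exact tendsto_of_tendsto_of_tendsto_of_le_of_le hl hu hlb hub

lemma exists_d1 {ω : Set E} (hω : MeasurableSet ω) {s : Set E} (hs : 0 < volume (ω ∩ s)) :
    ∃ w ∈ s, w ∈ densityPts ω 1 := by
  by_contra h
  push_neg at h
  have h1 : ∀ᵐ x : E, x ∈ ω → x ∈ densityPts ω 1 := (ae_density hω).mono fun x hx => hx.1
  have hsub : ω ∩ s ⊆ {x : E | ¬ (x ∈ ω → x ∈ densityPts ω 1)} := by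
    intro z hz
    simp only [mem_setOf_eq, Classical.not_imp]
    exact ⟨hz.1, h z hz.2⟩
  exact hs.ne' (measure_mono_null hsub (ae_iff.mp h1))

lemma exists_d0 {ω : Set E} (hω : MeasurableSet ω) {s : Set E} (hs : 0 < volume (ωᶜ ∩ s)) :
    ∃ u ∈ s, u ∈ densityPts ω 0 := by
  by_contra h
  push_neg at h
  have h1 : ∀ᵐ x : E, x ∉ ω → x ∈ densityPts ω 0 := (ae_density hω).mono fun x hx => hx.2
  have hsub : ωᶜ ∩ s ⊆ {x : E | ¬ (x ∉ ω → x ∈ densityPts ω 0)} := by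
    intro z hz
    simp only [mem_setOf_eq, Classical.not_imp]
    exact ⟨hz.1, h z hz.2⟩
  exact hs.ne' (measure_mono_null hsub (ae_iff.mp h1))

lemma ivt_half (ω : Set E) {w u : E} (hw : w ∈ densityPts ω 1) (hu : u ∈ densityPts ω 0)
    {ε : ℝ} (hε : 0 < ε) :
    ∃ v σ, 0 < σ ∧ σ ≤ ε ∧ v ∈ segment ℝ w u ∧
      volume (ω ∩ ball v σ) = volume (ball v σ) / 2 := by
  have hw' : Tendsto (fun ρ : ℝ => volume (ω ∩ ball w ρ) / volume (ball w ρ)) (𝓝[>] 0) (𝓝 1) := hw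
  have hu' : Tendsto (fun ρ : ℝ => volume (ω ∩ ball u ρ) / volume (ball u ρ)) (𝓝[>] 0) (𝓝 0) := hu
  have h12 : (1:ℝ≥0∞)/2 < 1 := ENNReal.half_lt_self one_ne_zero ENNReal.one_ne_top
  have h02 : (0:ℝ≥0∞) < 1/2 := by norm_num
  have hew := hw'.eventually (lt_mem_nhds h12)
  have heu := hu'.eventually (gt_mem_nhds h02)
  obtain ⟨δ, hδ, hδP⟩ := Metric.eventually_nhds_iff.mp (eventually_nhdsWithin_iff.mp (hew.and heu))
  set τ := min (δ/2) ε with hτdef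
  have hτ : 0 < τ := lt_min (by linarith) hε
  have hτδ : dist τ 0 < δ := by
    rw [Real.dist_eq, sub_zero, abs_of_pos hτ]
    exact lt_of_le_of_lt (min_le_left _ _) (by linarith)
  obtain ⟨hPw, hPu⟩ := hδP hτδ (mem_Ioi.mpr hτ)
  set c := volume (ball (0:E) 1) with hcdef
  set C := ENNReal.ofReal (τ ^ d) * c with hCdef
  have hCy : ∀ y : E, volume (ball y τ) = C := fun y => volB y hτ
  have hC0 : C ≠ 0 := by rw [← hCy w]; exact (measure_ball_pos _ _ hτ).ne'
  have hCt : C ≠ ⊤ := by rw [← hCy w]; exact measure_ball_lt_top.ne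
  rw [hCy w] at hPw
  rw [hCy u] at hPu
  have hhalf : C/2 = 1/2 * C := by rw [div_eq_mul_inv, one_div, mul_comm]
  have h1 : C/2 < volume (ω ∩ ball w τ) := by
    rw [hhalf]
    have := ENNReal.mul_lt_mul_right hC0 hCt hPw
    rw [mul_comm C, mul_comm C] at this
    rwa [ENNReal.div_mul_cancel hC0 hCt] at this
  have h2 : volume (ω ∩ ball u τ) < C/2 := by
    rw [hhalf]
    have := ENNReal.mul_lt_mul_right hC0 hCt hPu
    rw [mul_comm C, mul_comm C] at this
    rwa [ENNReal.div_mul_cancel hC0 hCt] at this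
  set γ : ℝ → E := fun t => w + t • (u - w) with hγdef
  have hγc : Continuous γ := by fun_prop
  have hIVT := intermediate_value_Icc' (zero_le_one (α := ℝ))
    (((cont_vol ω hτ).comp hγc).continuousOn
      : ContinuousOn (fun t => volume (ω ∩ ball (γ t) τ)) (Icc 0 1))
  have hγ0 : γ 0 = w := by simp [hγdef]
  have hγ1 : γ 1 = u := by simp [hγdef]
  have hmem : C/2 ∈ Icc (((fun y => volume (ω ∩ ball y τ)) ∘ γ) 1)
      (((fun y => volume (ω ∩ ball y τ)) ∘ γ) 0) := by
    simp only [Function.comp_apply, hγ0, hγ1]; exact ⟨h2.le, h1.le⟩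
  obtain ⟨t, ht, hft⟩ := hIVT hmem
  refine ⟨γ t, τ, hτ, min_le_right _ _, ?_, ?_⟩
  swap
  · simp only [Function.comp_apply] at hft
    rw [hft, hCy]
  rw [segment_eq_image']
  exact ⟨t, ht, rfl⟩

lemma compl_half {ω : Set E} (hω : MeasurableSet ω) {v : E} {σ : ℝ}
    (hhalf : volume (ω ∩ ball v σ) = volume (ball v σ) / 2) :
    volume (ωᶜ ∩ ball v σ) = volume (ball v σ) / 2 := by
  have hsum : volume (ω ∩ ball v σ) + volume (ωᶜ ∩ ball v σ) = volume (ball v σ) := by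
    have := measure_inter_add_diff (μ := volume) (ball v σ) hω
    rwa [inter_comm, diff_eq, inter_comm _ ωᶜ] at this
  rw [hhalf, add_comm] at hsum
  have := ENNReal.eq_sub_of_add_eq (by
    exact ne_top_of_le_ne_top measure_ball_lt_top.ne (by
      exact le_trans ENNReal.half_le_self le_rfl)) hsum
  rw [this, ENNReal.sub_half measure_ball_lt_top.ne]

lemma step {ω : Set E} (hω : MeasurableSet ω) {v : E} {σ : ℝ} (hσ : 0 < σ)
    (hhalf : volume (ω ∩ ball v σ) = volume (ball v σ) / 2) :
    ∃ v' σ', (0 < σ' ∧ volume (ω ∩ ball v' σ') = volume (ball v' σ') / 2) ∧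
      σ' ≤ σ/2 ∧ dist v' v ≤ σ := by
  have hB0 : volume (ball v σ) ≠ 0 := (measure_ball_pos _ _ hσ).ne'
  have hhalfpos : 0 < volume (ball v σ) / 2 := ENNReal.div_pos hB0 (by norm_num)
  have h1 : 0 < volume (ω ∩ ball v σ) := hhalf ▸ hhalfpos
  have h2 : 0 < volume (ωᶜ ∩ ball v σ) := (compl_half hω hhalf) ▸ hhalfpos
  obtain ⟨w, hwball, hw1⟩ := exists_d1 hω h1
  obtain ⟨u, huball, hu0⟩ := exists_d0 hω h2
  obtain ⟨v', σ', hσ', hσ'2, hseg, hhalf'⟩ := ivt_half ω hw1 hu0 (by linarith : (0:ℝ) < σ/2)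
  refine ⟨v', σ', ⟨hσ', hhalf'⟩, hσ'2, ?_⟩
  have : v' ∈ ball v σ := (convex_ball v σ).segment_subset hwball huball hseg
  exact (mem_ball.mp this).le

lemma key {ω : Set E} (hω : MeasurableSet ω) {v₀ : E} {σ₀ : ℝ} (hσ₀ : 0 < σ₀)
    (hhalf₀ : volume (ω ∩ ball v₀ σ₀) = volume (ball v₀ σ₀) / 2) :
    ∃ y ∈ essBoundary ω, dist y v₀ ≤ 2 * σ₀ := by
  classical
  set P : E × ℝ → Prop :=
    fun p => 0 < p.2 ∧ volume (ω ∩ ball p.1 p.2) = volume (ball p.1 p.2) / 2 with hPdef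
  have hstep : ∀ p : E × ℝ, P p → ∃ q : E × ℝ, P q ∧ q.2 ≤ p.2/2 ∧ dist q.1 p.1 ≤ p.2 := by
    rintro ⟨v, σ⟩ ⟨h1, h2⟩
    obtain ⟨v', σ', hq, hle, hdist⟩ := step hω h1 h2
    exact ⟨(v', σ'), hq, hle, hdist⟩
  choose! F hF1 hF2 hF3 using hstep
  set S : ℕ → E × ℝ := fun n => F^[n] (v₀, σ₀) with hSdef
  have hS0 : S 0 = (v₀, σ₀) := rfl
  have hSsucc : ∀ n, S (n+1) = F (S n) := fun n => Function.iterate_succ_apply' F n _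
  have hP : ∀ n, P (S n) := by
    intro n
    induction n with
    | zero => exact ⟨hσ₀, hhalf₀⟩
    | succ n ih => rw [hSsucc]; exact hF1 _ ih
  set v : ℕ → E := fun n => (S n).1 with hvdef
  set σ : ℕ → ℝ := fun n => (S n).2 with hσdef
  have hσpos : ∀ n, 0 < σ n := fun n => (hP n).1
  have hσhalf : ∀ n, σ (n+1) ≤ σ n / 2 := by
    intro n
    have := hF2 _ (hP n)
    rw [← hSsucc] at this
    exact this
  have hdist1 : ∀ n, dist (v (n+1)) (v n) ≤ σ n := by
    intro n
    have := hF3 _ (hP n)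
    rw [← hSsucc] at this
    exact this
  have hσgeom : ∀ n, σ n ≤ σ₀ * (1/2)^n := by
    intro n
    induction n with
    | zero => simp [hS0, hσdef]
    | succ n ih =>
      have h := hσhalf n
      have heq : σ₀ * (1/2)^(n+1) = (σ₀ * (1/2)^n)/2 := by ring
      rw [heq]
      linarith
  have hdist2 : ∀ n k, dist (v (n+k)) (v n) ≤ 2 * σ n - 2 * σ (n+k) := by
    intro n k
    induction k with
    | zero => simp
    | succ k ih =>
      have h1 : dist (v (n+(k+1))) (v n) ≤ dist (v (n+k+1)) (v (n+k)) + dist (v (n+k)) (v n) := by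
        rw [show n+(k+1) = n+k+1 by ring]
        exact dist_triangle _ _ _
      have h2 := hdist1 (n+k)
      have h3 := hσhalf (n+k)
      have h4 : n+(k+1) = n+k+1 := by ring
      rw [h4]
      calc dist (v (n+k+1)) (v n) ≤ σ (n+k) + (2 * σ n - 2 * σ (n+k)) := by
            rw [h4] at h1; linarith
        _ ≤ 2 * σ n - 2 * σ (n+k+1) := by linarith
  have hdist3 : ∀ n k, dist (v (n+k)) (v n) ≤ 2 * σ n := by
    intro n k
    have h1 := hdist2 n k
    have h2 := hσpos (n+k)
    linarith
  have hcauchy : CauchySeq v := by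
    refine cauchySeq_of_le_geometric (1/2) (2*σ₀) (by norm_num) fun n => ?_
    rw [dist_comm]
    calc dist (v (n+1)) (v n) ≤ σ n := hdist1 n
      _ ≤ σ₀ * (1/2)^n := hσgeom n
      _ ≤ 2*σ₀ * (1/2)^n := by
          have : (0:ℝ) < (1/2:ℝ)^n := by positivity
          nlinarith
  obtain ⟨y, hy⟩ := cauchySeq_tendsto_of_complete hcauchy
  have hvy : ∀ n, dist (v n) y ≤ 2 * σ n := by
    intro n
    have hlim : Tendsto (fun k => dist (v (k+n)) (v n)) atTop (𝓝 (dist y (v n))) :=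
      Tendsto.dist (hy.comp (tendsto_add_atTop_nat n)) tendsto_const_nhds
    rw [dist_comm]
    refine le_of_tendsto hlim (Filter.Eventually.of_forall fun k => ?_)
    rw [add_comm]
    exact hdist3 n k
  set c : ℝ≥0∞ := volume (ball (0:E) 1) with hcdef
  have hc0 : c ≠ 0 := (measure_ball_pos _ _ one_pos).ne'
  have hct : c ≠ ⊤ := measure_ball_lt_top.ne
  set K : ℝ≥0∞ := ENNReal.ofReal ((3:ℝ)^d) with hKdef
  have hK0 : K ≠ 0 := by
    simp only [hKdef, ne_eq, ENNReal.ofReal_eq_zero, not_le]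
    positivity
  have hKt : K ≠ ⊤ := ENNReal.ofReal_ne_top
  set c₀ : ℝ≥0∞ := K⁻¹ / 2 with hc₀def
  have hc₀ : 0 < c₀ := ENNReal.div_pos (ENNReal.inv_ne_zero.mpr hKt) (by norm_num)
  have hball_sub : ∀ n, ball (v n) (σ n) ⊆ ball y (3 * σ n) := by
    intro n z hz
    have h1 : dist z y ≤ dist z (v n) + dist (v n) y := dist_triangle _ _ _
    have h2 : dist z (v n) < σ n := mem_ball.mp hz
    have h3 := hvy n
    exact mem_ball.mpr (by linarith)
  have hbound : ∀ (s : Set E), (∀ n, volume (s ∩ ball (v n) (σ n)) = volume (ball (v n) (σ n)) / 2)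
      → ∀ n, c₀ ≤ volume (s ∩ ball y (3 * σ n)) / volume (ball y (3 * σ n)) := by
    intro s hs n
    set A : ℝ≥0∞ := ENNReal.ofReal ((σ n)^d) * c with hAdef
    have hA0 : A ≠ 0 := by
      rw [hAdef]
      refine mul_ne_zero ?_ hc0
      simp only [ne_eq, ENNReal.ofReal_eq_zero, not_le]
      have := hσpos n
      positivity
    have hAt : A ≠ ⊤ := ENNReal.mul_ne_top ENNReal.ofReal_ne_top hct
    have hvol1 : volume (ball (v n) (σ n)) = A := volB _ (hσpos n)
    have hvol2 : volume (ball y (3 * σ n)) = K * A := by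
      rw [volB _ (by have := hσpos n; linarith : (0:ℝ) < 3 * σ n), hAdef, hKdef]
      rw [mul_pow, ENNReal.ofReal_mul (by positivity), mul_assoc]
    have hnum : A / 2 ≤ volume (s ∩ ball y (3 * σ n)) := by
      calc A / 2 = volume (s ∩ ball (v n) (σ n)) := by rw [hs n, hvol1]
        _ ≤ _ := measure_mono (inter_subset_inter_right _ (hball_sub n))
    rw [hvol2]
    have hKA0 : K * A ≠ 0 := mul_ne_zero hK0 hA0
    have hKAt : K * A ≠ ⊤ := ENNReal.mul_ne_top hKt hAt
    rw [ENNReal.le_div_iff_mul_le (Or.inl hKA0) (Or.inl hKAt)]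
    calc c₀ * (K * A) = (K⁻¹ * K) * (A / 2) := by
          rw [hc₀def, div_eq_mul_inv, div_eq_mul_inv]; ring
      _ = A / 2 := by rw [ENNReal.inv_mul_cancel hK0 hKt, one_mul]
      _ ≤ volume (s ∩ ball y (3 * σ n)) := hnum
  have hσtend : Tendsto (fun n => 3 * σ n) atTop (𝓝[>] (0:ℝ)) := by
    refine tendsto_nhdsWithin_of_tendsto_nhds_of_eventually_within _ ?_
      (Filter.Eventually.of_forall fun n => mem_Ioi.mpr (by have := hσpos n; linarith))
    have h1 : Tendsto (fun n : ℕ => σ₀ * (1/2:ℝ)^n) atTop (𝓝 0) := by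
      have := tendsto_pow_atTop_nhds_zero_of_lt_one (by norm_num : (0:ℝ) ≤ 1/2)
        (by norm_num : (1/2:ℝ) < 1)
      simpa using this.const_mul σ₀
    have h2 : Tendsto σ atTop (𝓝 0) :=
      squeeze_zero (fun n => (hσpos n).le) hσgeom h1
    simpa using h2.const_mul (3:ℝ)
  have hfreq : ∀ (s : Set E), (∀ n, volume (s ∩ ball (v n) (σ n)) = volume (ball (v n) (σ n)) / 2)
      → posUpperDensity s y := by
    intro s hs
    have hfr : ∃ᶠ ρ in 𝓝[>] (0:ℝ), c₀ ≤ volume (s ∩ ball y ρ) / volume (ball y ρ) :=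
      hσtend.frequently (Filter.Frequently.of_forall (hbound s hs))
    exact lt_of_lt_of_le hc₀ (Filter.le_limsup_of_frequently_le hfr)
  refine ⟨y, ⟨hfreq ω (fun n => (hP n).2), hfreq ωᶜ (fun n => compl_half hω (hP n).2)⟩, ?_⟩
  have h0 := hvy 0
  rw [dist_comm] at h0
  simpa [hS0, hσdef, hvdef] using h0

lemma not_essB {ω : Set E} (hω : MeasurableSet ω) {x : E} (hx : x ∉ essBoundary ω) :
    x ∈ densityPts ω 0 ∪ densityPts ω 1 := by
  by_cases h1 : posUpperDensity ω x
  · right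
    have h2 : ¬ posUpperDensity ωᶜ x := fun h2 => hx ⟨h1, h2⟩
    exact (tendsto_one_iff_compl hω x).mpr (tendsto_zero_of_not_pos h2)
  · left
    exact tendsto_zero_of_not_pos h1

lemma d1_not_essB {ω : Set E} (hω : MeasurableSet ω) {x : E} (hx : x ∈ densityPts ω 1) :
    x ∉ essBoundary ω := by
  intro hmem
  have h1 : Tendsto (fun ρ : ℝ => volume (ωᶜ ∩ ball x ρ) / volume (ball x ρ)) (𝓝[>] 0) (𝓝 0) :=
    (tendsto_one_iff_compl hω x).mp hx
  have h2 := hmem.2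
  unfold posUpperDensity at h2
  rw [h1.limsup_eq] at h2
  exact lt_irrefl _ h2

end Stmt0Aux

open Stmt0Aux

/-- The set of density-1 points of `ω` minus the closure of the essential boundary equals
the interior of the set of density-1 points. -/
theorem stmt0 {d : ℕ} (ω : Set (EuclideanSpace ℝ (Fin d))) (hω : MeasurableSet ω) :
    densityPts ω 1 \ closure (essBoundary ω) = interior (densityPts ω 1) := by
  ext x
  simp only [mem_diff]
  constructor
  · rintro ⟨hx1, hx2⟩
    have hr : ∃ r > 0, ∀ z ∈ ball x r, z ∉ essBoundary ω := by
      by_contra h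
      push_neg at h
      refine hx2 (Metric.mem_closure_iff.mpr fun ε hε => ?_)
      obtain ⟨z, hz, hzmem⟩ := h ε hε
      exact ⟨z, hzmem, mem_ball'.mp hz⟩
    obtain ⟨r, hrpos, hdisj⟩ := hr
    have hsub : ball x (r/8) ⊆ densityPts ω 1 := by
      intro z hz
      have hz' : z ∉ essBoundary ω :=
        hdisj z (ball_subset_ball (by linarith) hz)
      rcases not_essB hω hz' with hz0 | hz1
      · exfalso
        obtain ⟨v₀, σ₀, hσ₀, hσ₀le, hseg, hhalf⟩ :=
          ivt_half ω hx1 hz0 (show (0:ℝ) < r/8 by linarith)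
        obtain ⟨yb, hyb, hybdist⟩ := key hω hσ₀ hhalf
        have hv₀ : dist v₀ x ≤ r/8 := by
          have : v₀ ∈ closedBall x (r/8) :=
            (convex_closedBall x (r/8)).segment_subset
              (mem_closedBall_self (by linarith)) (ball_subset_closedBall hz) hseg
          exact mem_closedBall.mp this
        have hyx : dist yb x < r := by
          have h1 : dist yb x ≤ dist yb v₀ + dist v₀ x := dist_triangle _ _ _
          linarith
        exact hdisj yb (mem_ball.mpr hyx) hyb
      · exact hz1
    exact mem_interior.mpr ⟨ball x (r/8), hsub, isOpen_ball, mem_ball_self (by linarith)⟩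
  · intro hx
    refine ⟨interior_subset hx, fun hcl => ?_⟩
    obtain ⟨z, hz_int, hz_ess⟩ :=
      (_root_.mem_closure_iff.mp hcl) _ isOpen_interior hx
    exact d1_not_essB hω (interior_subset hz_int) hz_ess
end

section
/- Let ω ⊂ ℝ^d be a bounded open set that is Steiner symmetric about d hyperplanes H_1, …, H_d whose unit normals ν_1, …, ν_d are linearly independent. Then ω is connected (in fact path-connected) and contains its centre of mass. -/
open MeasureTheory Metric Filter Set
open scoped RealInnerProductSpace Topology ENNReal

/-- `ω` is Steiner symmetric about the hyperplane `{x | ⟪x, ν⟫ = c}` with unit normal `ν`: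
every slice of `ω` along a line orthogonal to the hyperplane is an open segment centred on
the hyperplane. -/
def SteinerSymmAt {d : ℕ} (ω : Set (EuclideanSpace ℝ (Fin d)))
    (ν : EuclideanSpace ℝ (Fin d)) (c : ℝ) : Prop :=
  ∃ L : EuclideanSpace ℝ (Fin d) → ℝ, (∀ z, 0 ≤ L z) ∧
    ∀ z, ⟪z, ν⟫ = c → ∀ t : ℝ, (z + t • ν ∈ ω ↔ |t| < L z / 2)

variable {d : ℕ} {ω : Set (EuclideanSpace ℝ (Fin d))} {ν : EuclideanSpace ℝ (Fin d)} {c : ℝ}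

lemma proj_inner (hν : ‖ν‖ = 1) (x : EuclideanSpace ℝ (Fin d)) :
    ⟪x - (⟪x, ν⟫ - c) • ν, ν⟫ = c := by
  have h : ⟪ν, ν⟫ = 1 := by
    rw [real_inner_self_eq_norm_sq, hν]; norm_num
  rw [inner_sub_left, real_inner_smul_left, h]; ring

lemma steiner_mem (h : SteinerSymmAt ω ν c) (hν : ‖ν‖ = 1) {x : EuclideanSpace ℝ (Fin d)}
    (hx : x ∈ ω) {s : ℝ} (hs : |s| ≤ |⟪x, ν⟫ - c|) :
    (x - (⟪x, ν⟫ - c) • ν) + s • ν ∈ ω := by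
  obtain ⟨L, -, hL⟩ := h
  set t := ⟪x, ν⟫ - c with ht
  have hz : ⟪x - t • ν, ν⟫ = c := proj_inner hν x
  have hxt : |t| < L (x - t • ν) / 2 := by
    refine (hL _ hz t).mp ?_
    rwa [sub_add_cancel]
  exact (hL _ hz s).mpr (lt_of_le_of_lt hs hxt)

lemma steiner_ball (h : SteinerSymmAt ω ν c) (hν : ‖ν‖ = 1) {x : EuclideanSpace ℝ (Fin d)}
    {r : ℝ} (hb : ball x r ⊆ ω) :
    ball (x - (⟪x, ν⟫ - c) • ν) r ⊆ ω := by
  obtain ⟨L, -, hL⟩ := h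
  intro y hy
  set t := ⟪x, ν⟫ - c with htdef
  set s := ⟪y, ν⟫ - c with hsdef
  set zx := x - t • ν with hzxdef
  set z := y - s • ν with hzdef
  have hz : ⟪z, ν⟫ = c := proj_inner hν y
  have hzx : ⟪zx, ν⟫ = c := proj_inner hν x
  have horth : ⟪z - zx, ν⟫ = 0 := by rw [inner_sub_left, hz, hzx]; ring
  have key : ∀ a : ℝ, ‖(z - zx) + a • ν‖ ^ 2 = ‖z - zx‖ ^ 2 + a ^ 2 := by
    intro a
    rw [norm_add_sq_real, real_inner_smul_right, horth, norm_smul, hν]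
    simp [sq_abs]
  have hr0 : 0 ≤ r := le_of_lt (lt_of_le_of_lt dist_nonneg (mem_ball.mp hy))
  have hy2 : ‖z - zx‖ ^ 2 + s ^ 2 < r ^ 2 := by
    have h1 : ‖y - zx‖ < r := by rw [← dist_eq_norm]; exact mem_ball.mp hy
    have h2 : y - zx = (z - zx) + s • ν := by rw [hzdef]; module
    calc ‖z - zx‖ ^ 2 + s ^ 2 = ‖y - zx‖ ^ 2 := by rw [h2, key]
    _ < r ^ 2 := by
        apply pow_lt_pow_left₀ h1 (norm_nonneg _) (by norm_num)
  have hmem : ∀ a : ℝ, ‖z - zx‖ ^ 2 + a ^ 2 < r ^ 2 → |t + a| < L z / 2 := by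
    intro a ha
    have hp : z + (t + a) • ν ∈ ω := by
      apply hb
      rw [mem_ball, dist_eq_norm]
      have h2 : z + (t + a) • ν - x = (z - zx) + a • ν := by rw [hzxdef]; module
      have h3 : ‖z + (t + a) • ν - x‖ ^ 2 < r ^ 2 := by rw [h2, key]; exact ha
      exact lt_of_pow_lt_pow_left₀ 2 hr0 h3
    exact (hL z hz _).mp hp
  have h1 : |t + s| < L z / 2 := hmem s hy2
  have h2 : |t + -s| < L z / 2 := hmem (-s) (by rw [neg_pow]; simpa using hy2)
  have habs : |s| < L z / 2 := by
    have : |2 * s| ≤ |t + s| + |t + -s| := by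
      calc |2 * s| = |(t + s) + -(t + -s)| := by ring_nf
      _ ≤ |t + s| + |-(t + -s)| := abs_add_le _ _
      _ = |t + s| + |t + -s| := by rw [abs_neg]
    rw [abs_mul] at this
    simp only [abs_two] at this
    linarith
  have : z + s • ν ∈ ω := (hL z hz s).mpr habs
  simpa [hzdef, sub_add_cancel] using this

lemma steiner_joined (h : SteinerSymmAt ω ν c) (hν : ‖ν‖ = 1) {x : EuclideanSpace ℝ (Fin d)}
    (hx : x ∈ ω) : JoinedIn ω x (x - (⟪x, ν⟫ - c) • ν) := by
  apply JoinedIn.of_segment_subset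
  intro p hp
  rw [segment_eq_image] at hp
  obtain ⟨θ, hθ, rfl⟩ := hp
  set t := ⟪x, ν⟫ - c with htdef
  show (1 - θ) • x + θ • (x - t • ν) ∈ ω
  have hrw : (1 - θ) • x + θ • (x - t • ν) = (x - t • ν) + ((1 - θ) * t) • ν := by module
  rw [hrw]
  refine steiner_mem h hν hx ?_
  rw [← htdef, abs_mul]
  have h1 : |1 - θ| ≤ 1 := abs_le.mpr ⟨by linarith [hθ.2], by linarith [hθ.1]⟩
  calc |1 - θ| * |t| ≤ 1 * |t| := mul_le_mul_of_nonneg_right h1 (abs_nonneg _)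
  _ = |t| := one_mul _

section family

variable {νf : Fin d → EuclideanSpace ℝ (Fin d)} {cf : Fin d → ℝ}

lemma gfold_smul (νf : Fin d → EuclideanSpace ℝ (Fin d)) (l : List (Fin d)) (a : ℝ) :
    ∀ v, l.foldl (fun w k => w - ⟪w, νf k⟫ • νf k) (a • v)
      = a • l.foldl (fun w k => w - ⟪w, νf k⟫ • νf k) v := by
  induction l with
  | nil => intro v; simp
  | cons k l ih =>
    intro v
    rw [List.foldl_cons, List.foldl_cons]
    have : a • v - ⟪a • v, νf k⟫ • νf k = a • (v - ⟪v, νf k⟫ • νf k) := by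
      rw [real_inner_smul_left]; module
    rw [this]; exact ih _

lemma gfold_cont (νf : Fin d → EuclideanSpace ℝ (Fin d)) (l : List (Fin d)) :
    Continuous (fun v : EuclideanSpace ℝ (Fin d) =>
      l.foldl (fun w k => w - ⟪w, νf k⟫ • νf k) v) := by
  induction l with
  | nil => exact continuous_id
  | cons k l ih =>
    have hstep : Continuous (fun v : EuclideanSpace ℝ (Fin d) => v - ⟪v, νf k⟫ • νf k) :=
      by fun_prop
    exact ih.comp hstep

lemma gfold_norm (hunit : ∀ k, ‖νf k‖ = 1) (l : List (Fin d)) :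
    ∀ v : EuclideanSpace ℝ (Fin d),
      ‖l.foldl (fun w k => w - ⟪w, νf k⟫ • νf k) v‖ ≤ ‖v‖ ∧
      (‖l.foldl (fun w k => w - ⟪w, νf k⟫ • νf k) v‖ = ‖v‖ → ∀ k ∈ l, ⟪v, νf k⟫ = 0) := by
  induction l with
  | nil => intro v; exact ⟨le_refl _, fun _ k hk => absurd hk List.not_mem_nil⟩
  | cons k l ih =>
    intro v
    set w := v - ⟪v, νf k⟫ • νf k with hwdef
    have hw2 : ‖w‖ ^ 2 = ‖v‖ ^ 2 - ⟪v, νf k⟫ ^ 2 := by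
      rw [hwdef, norm_sub_sq_real, real_inner_smul_right, norm_smul, hunit k]
      simp [sq_abs]
      ring
    have hle : ‖w‖ ≤ ‖v‖ := by nlinarith [norm_nonneg w, norm_nonneg v, sq_nonneg ⟪v, νf k⟫]
    rw [List.foldl_cons, ← hwdef]
    refine ⟨(ih w).1.trans hle, ?_⟩
    intro heq k' hk'
    have hww : ‖w‖ = ‖v‖ := le_antisymm hle (heq ▸ (ih w).1)
    have hip : ⟪v, νf k⟫ = 0 := by
      have h2 : ‖w‖ ^ 2 = ‖v‖ ^ 2 := by rw [hww]
      have : ⟪v, νf k⟫ ^ 2 = 0 := by linarith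
      exact pow_eq_zero_iff (by norm_num) |>.mp this
    have hwv : w = v := by rw [hwdef, hip]; simp
    rcases List.mem_cons.mp hk' with h | h
    · rw [h]; exact hip
    · have := (ih w).2 (heq.trans hww.symm) k' h
      rwa [hwv] at this

lemma fold_sub_x0 {x₀ : EuclideanSpace ℝ (Fin d)} (hx₀ : ∀ k, ⟪x₀, νf k⟫ = cf k)
    (l : List (Fin d)) :
    ∀ y, l.foldl (fun y k => y - (⟪y, νf k⟫ - cf k) • νf k) y - x₀
      = l.foldl (fun w k => w - ⟪w, νf k⟫ • νf k) (y - x₀) := by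
  induction l with
  | nil => intro y; simp
  | cons k l ih =>
    intro y
    rw [List.foldl_cons, List.foldl_cons]
    have : y - (⟪y, νf k⟫ - cf k) • νf k = (y - x₀ - ⟪y - x₀, νf k⟫ • νf k) + x₀ := by
      rw [inner_sub_left, hx₀ k]; module
    rw [this]
    have := ih ((y - x₀ - ⟪y - x₀, νf k⟫ • νf k) + x₀)
    rw [this, add_sub_cancel_right]

end family

/-- A nonempty bounded open set in `ℝ^d`, Steiner symmetric about `d` hyperplanes whose unit
normals are linearly independent, is (path-)connected and contains its centre of mass. -/
theorem stmt2 {d : ℕ} (ω : Set (EuclideanSpace ℝ (Fin d))) (hopen : IsOpen ω)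
    (hbdd : Bornology.IsBounded ω) (hne : ω.Nonempty)
    (ν : Fin d → EuclideanSpace ℝ (Fin d)) (c : Fin d → ℝ)
    (hunit : ∀ k, ‖ν k‖ = 1) (hli : LinearIndependent ℝ ν)
    (hsym : ∀ k, SteinerSymmAt ω (ν k) (c k)) :
    IsPathConnected ω ∧ (volume ω).toReal⁻¹ • (∫ x in ω, x) ∈ ω := by
  rcases Nat.eq_zero_or_pos d with hd0 | hd
  · -- degenerate case d = 0
    have hsub : Subsingleton (EuclideanSpace ℝ (Fin d)) := by
      subst hd0; infer_instance
    obtain ⟨x, hx⟩ := hne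
    constructor
    · exact ⟨x, hx, by intro y hy; rw [Subsingleton.elim y x]; exact JoinedIn.refl hx⟩
    · rw [Subsingleton.elim ((volume ω).toReal⁻¹ • (∫ x in ω, x)) x]; exact hx
  -- setup: spanning, kernel lemma, the point x₀
  have hspan : Submodule.span ℝ (Set.range ν) = ⊤ := by
    have : Nonempty (Fin d) := ⟨⟨0, hd⟩⟩
    exact hli.span_eq_top_of_card_eq_finrank (by simp [finrank_euclideanSpace_fin])
  have hker : ∀ w : EuclideanSpace ℝ (Fin d), (∀ k, ⟪w, ν k⟫ = 0) → w = 0 := by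
    intro w hw
    have hwT : w ∈ Submodule.span ℝ (Set.range ν) := by rw [hspan]; trivial
    obtain ⟨a, ha⟩ := (Submodule.mem_span_range_iff_exists_fun ℝ).mp hwT
    have : ⟪w, w⟫ = 0 := by
      nth_rewrite 2 [← ha]
      rw [inner_sum]
      apply Finset.sum_eq_zero
      intro i _
      rw [real_inner_smul_right, hw i, mul_zero]
    exact inner_self_eq_zero.mp this
  obtain ⟨x₀, hx₀⟩ : ∃ x₀ : EuclideanSpace ℝ (Fin d), ∀ k, ⟪x₀, ν k⟫ = c k := by
    set T : EuclideanSpace ℝ (Fin d) →ₗ[ℝ] (Fin d → ℝ) :=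
      LinearMap.pi (fun k => innerₛₗ ℝ (ν k)) with hT
    have hTinj : Function.Injective T := by
      rw [← LinearMap.ker_eq_bot]
      rw [Submodule.eq_bot_iff]
      intro w hw
      refine hker w fun k => ?_
      have h2 := congrFun (LinearMap.mem_ker.mp hw) k
      simp only [hT, LinearMap.pi_apply, innerₛₗ_apply_apply, Pi.zero_apply] at h2
      rw [real_inner_comm]
      exact h2
    have hTsurj : Function.Surjective T :=
      (LinearMap.injective_iff_surjective_of_finrank_eq_finrank
        (by simp [finrank_euclideanSpace_fin])).mp hTinj
    obtain ⟨x₀, hx₀T⟩ := hTsurj c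
    refine ⟨x₀, fun k => ?_⟩
    have h2 := congrFun hx₀T k
    simp only [hT, LinearMap.pi_apply, innerₛₗ_apply_apply] at h2
    rw [real_inner_comm]
    exact h2
  -- the cyclic projection map and its linear part
  set step : Fin d → EuclideanSpace ℝ (Fin d) → EuclideanSpace ℝ (Fin d) :=
    fun k y => y - (⟪y, ν k⟫ - c k) • ν k with hstepdef
  set F : EuclideanSpace ℝ (Fin d) → EuclideanSpace ℝ (Fin d) :=
    fun y => (List.finRange d).foldl (fun y k => step k y) y with hFdef
  set G : EuclideanSpace ℝ (Fin d) → EuclideanSpace ℝ (Fin d) :=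
    fun v => (List.finRange d).foldl (fun w k => w - ⟪w, ν k⟫ • ν k) v with hGdef
  have hfold_mem : ∀ l : List (Fin d), ∀ y ∈ ω,
      (l.foldl (fun y k => step k y) y) ∈ ω ∧ JoinedIn ω y (l.foldl (fun y k => step k y) y) := by
    intro l
    induction l with
    | nil => intro y hy; exact ⟨hy, JoinedIn.refl hy⟩
    | cons k l ih =>
      intro y hy
      have h1 : step k y ∈ ω := by
        have := steiner_mem (hsym k) (hunit k) hy (s := 0) (by simp)
        simpa [hstepdef] using this
      have h2 : JoinedIn ω y (step k y) := steiner_joined (hsym k) (hunit k) hy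
      rw [List.foldl_cons]
      exact ⟨(ih _ h1).1, h2.trans (ih _ h1).2⟩
  have hfold_ball : ∀ l : List (Fin d), ∀ y : EuclideanSpace ℝ (Fin d), ∀ r : ℝ,
      ball y r ⊆ ω → ball (l.foldl (fun y k => step k y) y) r ⊆ ω := by
    intro l
    induction l with
    | nil => intro y r hb; exact hb
    | cons k l ih =>
      intro y r hb
      rw [List.foldl_cons]
      exact ih _ r (steiner_ball (hsym k) (hunit k) hb)
  have hFsub : ∀ y, F y - x₀ = G (y - x₀) := fun y => fold_sub_x0 hx₀ _ y
  -- the contraction constant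
  have hGle : ∀ v, ‖G v‖ ≤ ‖v‖ := fun v => (gfold_norm hunit _ v).1
  have hsne : (sphere (0 : EuclideanSpace ℝ (Fin d)) 1).Nonempty :=
    ⟨EuclideanSpace.single ⟨0, hd⟩ 1, by simp [EuclideanSpace.norm_single]⟩
  obtain ⟨vm, hvm, hmax⟩ := (isCompact_sphere (0 : EuclideanSpace ℝ (Fin d)) 1).exists_isMaxOn
    hsne ((gfold_cont ν (List.finRange d)).norm.continuousOn)
  set q := ‖G vm‖ with hqdef
  have hvm1 : ‖vm‖ = 1 := mem_sphere_zero_iff_norm.mp hvm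
  have hq0 : 0 ≤ q := norm_nonneg _
  have hqlt : q < 1 := by
    refine lt_of_le_of_ne (hvm1 ▸ hGle vm) ?_
    intro hq
    have h0 : ∀ k, ⟪vm, ν k⟫ = 0 := by
      intro k
      refine (gfold_norm hunit (List.finRange d) vm).2 ?_ k (List.mem_finRange k)
      show q = ‖vm‖
      rw [hvm1, hq]
    have := hker vm h0
    rw [this, norm_zero] at hvm1
    norm_num at hvm1
  have hqv : ∀ v, ‖G v‖ ≤ q * ‖v‖ := by
    intro v
    rcases eq_or_ne v 0 with rfl | hv
    · have hG0 : G (0 : EuclideanSpace ℝ (Fin d)) = 0 := by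
        have := gfold_smul ν (List.finRange d) 0 (0 : EuclideanSpace ℝ (Fin d))
        simpa [hGdef] using this
      simp [hG0]
    · have hvn : ‖v‖ ≠ 0 := norm_ne_zero_iff.mpr hv
      have hmem : ‖v‖⁻¹ • v ∈ sphere (0 : EuclideanSpace ℝ (Fin d)) 1 := by
        rw [mem_sphere_zero_iff_norm, norm_smul, norm_inv, norm_norm, inv_mul_cancel₀ hvn]
      have h1 : ‖G (‖v‖⁻¹ • v)‖ ≤ q := hmax hmem
      have hsm : G (‖v‖⁻¹ • v) = ‖v‖⁻¹ • G v := gfold_smul ν (List.finRange d) _ v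
      rw [hsm, norm_smul, norm_inv, norm_norm] at h1
      rw [inv_mul_le_iff₀ (lt_of_le_of_ne (norm_nonneg v) (Ne.symm hvn))] at h1
      linarith [h1]
  -- key: every point is joined to x₀ inside ω
  have key : ∀ y ∈ ω, JoinedIn ω y x₀ ∧ x₀ ∈ ω := by
    intro y hy
    obtain ⟨r, hr, hball⟩ := Metric.isOpen_iff.mp hopen y hy
    have hu : ∀ n : ℕ, (ball (F^[n] y) r ⊆ ω) ∧ (F^[n] y ∈ ω) ∧ JoinedIn ω y (F^[n] y) ∧
        ‖F^[n] y - x₀‖ ≤ q ^ n * ‖y - x₀‖ := by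
      intro n
      induction n with
      | zero => exact ⟨by simpa using hball, by simpa using hy,
          by simpa using JoinedIn.refl hy, by simp⟩
      | succ n ih =>
        obtain ⟨ih1, ih2, ih3, ih4⟩ := ih
        have hsucc : F^[n+1] y = F (F^[n] y) := Function.iterate_succ_apply' F n y
        refine ⟨?_, ?_, ?_, ?_⟩
        · rw [hsucc]; exact hfold_ball _ _ r ih1
        · rw [hsucc]; exact (hfold_mem _ _ ih2).1
        · rw [hsucc]; exact ih3.trans (hfold_mem _ _ ih2).2
        · rw [hsucc]
          calc ‖F (F^[n] y) - x₀‖ = ‖G (F^[n] y - x₀)‖ := by rw [hFsub]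
          _ ≤ q * ‖F^[n] y - x₀‖ := hqv _
          _ ≤ q * (q ^ n * ‖y - x₀‖) := by
              exact mul_le_mul_of_nonneg_left ih4 hq0
          _ = q ^ (n + 1) * ‖y - x₀‖ := by ring
    have htend : Tendsto (fun n => q ^ n * ‖y - x₀‖) atTop (𝓝 0) := by
      simpa using (tendsto_pow_atTop_nhds_zero_of_lt_one hq0 hqlt).mul_const ‖y - x₀‖
    obtain ⟨n, hn⟩ := (htend.eventually (gt_mem_nhds hr)).exists
    have hx0ball : x₀ ∈ ball (F^[n] y) r := by
      rw [mem_ball, dist_comm, dist_eq_norm]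
      exact lt_of_le_of_lt (hu n).2.2.2 hn
    have hx₀ω : x₀ ∈ ω := (hu n).1 hx0ball
    have hseg : JoinedIn ω (F^[n] y) x₀ := JoinedIn.of_segment_subset
      (((convex_ball (F^[n] y) r).segment_subset (mem_ball_self hr) hx0ball).trans (hu n).1)
    exact ⟨(hu n).2.2.1.trans hseg, hx₀ω⟩
  obtain ⟨y0, hy0⟩ := hne
  have hx₀ω : x₀ ∈ ω := (key y0 hy0).2
  constructor
  · exact ⟨x₀, hx₀ω, by intro y hy; exact ((key y hy).1).symm⟩
  · -- barycentre
    have hνν : ∀ k, ⟪ν k, ν k⟫ = (1 : ℝ) := fun k => by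
      rw [real_inner_self_eq_norm_sq, hunit k]; norm_num
    have hvol : volume ω < ⊤ := hbdd.measure_lt_top
    have hmeas : MeasurableSet ω := hopen.measurableSet
    -- integrability of the identity on ω
    obtain ⟨M, hM⟩ := (isBounded_iff_subset_closedBall (0 : EuclideanSpace ℝ (Fin d))).mp hbdd
    have hInt : IntegrableOn (fun x : EuclideanSpace ℝ (Fin d) => x) ω volume := by
      apply Measure.integrableOn_of_bounded (M := M) (by simp [hvol.ne]) aestronglyMeasurable_id
      filter_upwards [ae_restrict_mem hmeas] with x hx
      exact mem_closedBall_zero_iff.mp (hM hx)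
    -- reflection symmetry kills the first moments
    have hIk : ∀ k, ∫ x in ω, (⟪x, ν k⟫ - c k) = 0 := by
      intro k
      set R : EuclideanSpace ℝ (Fin d) → EuclideanSpace ℝ (Fin d) :=
        fun x => x - (2 * (⟪x, ν k⟫ - c k)) • ν k with hRdef
      have hRip : ∀ x, ⟪R x, ν k⟫ = 2 * c k - ⟪x, ν k⟫ := by
        intro x
        rw [hRdef]
        simp only [inner_sub_left, real_inner_smul_left, hνν k]
        ring
      have hRinvol : ∀ x, R (R x) = x := by
        intro x
        have h1 := hRip x
        show R x - (2 * (⟪R x, ν k⟫ - c k)) • ν k = x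
        rw [h1, hRdef]
        module
      have hRcont : Continuous R := by
        fun_prop
      set Rhom : Homeomorph (EuclideanSpace ℝ (Fin d)) (EuclideanSpace ℝ (Fin d)) :=
        ⟨⟨R, R, hRinvol, hRinvol⟩, hRcont, hRcont⟩ with hRhom
      have hRemb : MeasurableEmbedding R := Rhom.measurableEmbedding
      -- R is measure preserving
      set Lr := Submodule.reflection ((ℝ ∙ (ν k))ᗮ) with hLrdef
      have hLr : ∀ v, Lr v = v - (2 * ⟪ν k, v⟫) • ν k := by
        intro v
        rw [hLrdef, Submodule.reflection_orthogonal_apply, Submodule.reflection_singleton_apply, hunit k]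
        push_cast
        match_scalars <;> ring
      have hReq : R = (fun y => y + x₀) ∘ (Lr ∘ (fun x => x - x₀)) := by
        funext x
        show R x = Lr (x - x₀) + x₀
        rw [hLr]
        have h2 : ⟪ν k, x - x₀⟫ = ⟪x, ν k⟫ - c k := by
          rw [real_inner_comm, inner_sub_left, hx₀ k]
        rw [h2, hRdef]
        module
      have hsubmp : MeasurePreserving (fun x : EuclideanSpace ℝ (Fin d) => x - x₀)
          volume volume := by
        simpa [sub_eq_add_neg] using
          measurePreserving_add_right (volume : Measure (EuclideanSpace ℝ (Fin d))) (-x₀)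
      have hRmp : MeasurePreserving R volume volume := by
        rw [hReq]
        exact (measurePreserving_add_right volume x₀).comp
          (Lr.measurePreserving.comp hsubmp)
      have hRpre : R ⁻¹' ω = ω := by
        obtain ⟨L, -, hL⟩ := hsym k
        ext x
        set t := ⟪x, ν k⟫ - c k with htdef
        have hz : ⟪x - t • ν k, ν k⟫ = c k := proj_inner (hunit k) x
        have hx' : x = (x - t • ν k) + t • ν k := by module
        have hR' : R x = (x - t • ν k) + (-t) • ν k := by rw [hRdef]; module
        simp only [mem_preimage]
        rw [hR', hL _ hz (-t), abs_neg]
        conv_rhs => rw [hx']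
        rw [hL _ hz t]
      have hcomp := hRmp.setIntegral_preimage_emb hRemb
        (fun x => ⟪x, ν k⟫ - c k) ω
      rw [hRpre] at hcomp
      have : ∫ x in ω, (⟪R x, ν k⟫ - c k) = ∫ x in ω, -(⟪x, ν k⟫ - c k) := by
        apply integral_congr_ae
        filter_upwards with x
        rw [hRip x]; ring
      rw [this, integral_neg] at hcomp
      linarith [hcomp]
    -- the first moments give the barycentre
    have hproj : ∀ k, ⟪(∫ x in ω, x), ν k⟫ = (volume ω).toReal * c k := by
      intro k
      have hconst : IntegrableOn (fun _ : EuclideanSpace ℝ (Fin d) => c k) ω volume :=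
        integrableOn_const hvol.ne
      have hlin : IntegrableOn (fun x : EuclideanSpace ℝ (Fin d) => ⟪x, ν k⟫) ω volume := by
        have := (innerSL ℝ (ν k)).integrable_comp hInt
        apply this.congr
        filter_upwards with x
        simp only [innerSL_apply_apply]
        exact real_inner_comm _ _
      have hsub : IntegrableOn (fun x : EuclideanSpace ℝ (Fin d) => ⟪x, ν k⟫ - c k) ω volume :=
        hlin.sub hconst
      calc ⟪(∫ x in ω, x), ν k⟫ = ∫ x in ω, ⟪ν k, x⟫ := by
            rw [real_inner_comm]; exact (integral_inner hInt (ν k)).symm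
      _ = ∫ x in ω, ((⟪x, ν k⟫ - c k) + c k) := by
            apply integral_congr_ae
            filter_upwards with x
            rw [real_inner_comm]; ring
      _ = (∫ x in ω, (⟪x, ν k⟫ - c k)) + ∫ x in ω, (c k : ℝ) := integral_add hsub hconst
      _ = (volume ω).toReal * c k := by
            rw [hIk k, setIntegral_const, smul_eq_mul, zero_add, measureReal_def]
    have hbary : (∫ x in ω, x) = (volume ω).toReal • x₀ := by
      refine sub_eq_zero.mp (hker _ fun k => ?_)
      rw [inner_sub_left, real_inner_smul_left, hx₀ k, hproj k]
      ring
    have htne : (volume ω).toReal ≠ 0 :=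
      (ENNReal.toReal_pos (hopen.measure_pos volume ⟨y0, hy0⟩).ne' hvol.ne).ne'
    rw [hbary, smul_smul, inv_mul_cancel₀ htne, one_smul]
    exact hx₀ω
end

section
/- Let H_1, …, H_d be hyperplanes in ℝ^d through the origin whose unit normals are linearly independent, and extend them to a d-periodic sequence H_n (H_{n+d} = H_n). For any starting point x_0 ∈ ℝ^d, define x_n as the orthogonal projection of x_{n-1} onto H_n. Then the sequence (x_n) converges to the origin (the unique common point of all the hyperplanes). -/
open MeasureTheory Metric Filter Set
open scoped RealInnerProductSpace Topology ENNReal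

private lemma aux_mod (d j m : ℕ) (hd : 0 < d) (hj : j < d) :
    (m + ((j + (d - (m + 1) % d)) % d) + 1) % d = j := by
  set r := (m + 1) % d with hr
  have hrd : r < d := Nat.mod_lt _ hd
  obtain ⟨q, hq⟩ : ∃ q, m + 1 = d * q + r := ⟨(m + 1) / d, by rw [hr]; exact (Nat.div_add_mod (m + 1) d).symm⟩
  have h2 : (m + (j + (d - r)) % d + 1) ≡ j [MOD d] := by
    calc m + (j + (d - r)) % d + 1
        ≡ m + (j + (d - r)) + 1 [MOD d] :=
          (Nat.ModEq.add_left m (Nat.mod_modEq _ d)).add_right 1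
      _ = (m + 1) + (j + (d - r)) := by ring
      _ = d * q + (j + d) := by omega
      _ ≡ j [MOD d] := by
          unfold Nat.ModEq
          simp [Nat.add_mul_mod_self_left, Nat.mul_add_mod, Nat.add_mod_right]
  have : (m + (j + (d - r)) % d + 1) % d = j % d := h2
  rwa [Nat.mod_eq_of_lt hj] at this

/-- Iterated orthogonal projections onto `d` hyperplanes through the origin, repeated
cyclically, whose unit normals are linearly independent, converge to the origin
(the unique common point of the hyperplanes). -/
theorem stmt3 {d : ℕ} (hd : 0 < d) (ν : Fin d → EuclideanSpace ℝ (Fin d))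
    (hunit : ∀ i, ‖ν i‖ = 1) (hli : LinearIndependent ℝ ν)
    (x : ℕ → EuclideanSpace ℝ (Fin d))
    (hx : ∀ n : ℕ, x (n + 1) =
      x n - ⟪x n, ν ⟨(n + 1) % d, Nat.mod_lt _ hd⟩⟫ • ν ⟨(n + 1) % d, Nat.mod_lt _ hd⟩) :
    Filter.Tendsto x Filter.atTop (nhds 0) := by
  set i : ℕ → Fin d := fun n => ⟨(n + 1) % d, Nat.mod_lt _ hd⟩ with hi
  set c : ℕ → ℝ := fun n => ⟪x n, ν (i n)⟫ with hc
  have hx' : ∀ n, x (n + 1) = x n - c n • ν (i n) := hx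
  have hνν : ∀ j, ⟪ν j, ν j⟫ = 1 := by
    intro j
    rw [real_inner_self_eq_norm_sq, hunit]; norm_num
  have horth : ∀ n, ⟪x (n + 1), ν (i n)⟫ = 0 := by
    intro n
    rw [hx' n, inner_sub_left, real_inner_smul_left, hνν]
    ring
  have hstep : ∀ n, ‖x (n + 1) - x n‖ = |c n| := by
    intro n
    rw [hx' n]
    have : x n - c n • ν (i n) - x n = -(c n • ν (i n)) := by abel
    rw [this, norm_neg, norm_smul, hunit]
    simp
  have hnorm : ∀ n, ‖x (n + 1)‖ ^ 2 + c n ^ 2 = ‖x n‖ ^ 2 := by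
    intro n
    have h1 : x n = x (n + 1) + c n • ν (i n) := by rw [hx' n]; abel
    conv_rhs => rw [h1]
    rw [norm_add_sq_real, real_inner_smul_right, horth, norm_smul, hunit]
    simp [abs_sq]
  have hmono : ∀ n, ‖x (n + 1)‖ ^ 2 ≤ ‖x n‖ ^ 2 := fun n => by
    nlinarith [sq_nonneg (c n), hnorm n]
  have hanti : Antitone fun n => ‖x n‖ ^ 2 :=
    antitone_nat_of_succ_le hmono
  have hbdd : BddBelow (Set.range fun n => ‖x n‖ ^ 2) :=
    ⟨0, by rintro _ ⟨n, rfl⟩; positivity⟩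
  have hL : Tendsto (fun n => ‖x n‖ ^ 2) atTop (nhds (⨅ n, ‖x n‖ ^ 2)) :=
    tendsto_atTop_ciInf hanti hbdd
  have hc2 : Tendsto (fun n => c n ^ 2) atTop (nhds 0) := by
    have h' : Tendsto (fun n => ‖x (n + 1)‖ ^ 2) atTop (nhds (⨅ n, ‖x n‖ ^ 2)) :=
      hL.comp (tendsto_add_atTop_nat 1)
    have := hL.sub h'
    rw [sub_self] at this
    convert this using 2 with n
    rw [← hnorm n]; ring
  have habs : Tendsto (fun n => |c n|) atTop (nhds 0) := by
    have h1 : Tendsto (fun n => Real.sqrt (c n ^ 2)) atTop (nhds (Real.sqrt 0)) :=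
      (Real.continuous_sqrt.tendsto 0).comp hc2
    simpa [Real.sqrt_sq_eq_abs] using h1
  have htel : ∀ m k, ‖x (m + k) - x m‖ ≤ ∑ jj ∈ Finset.range k, |c (m + jj)| := by
    intro m k
    induction k with
    | zero => simp
    | succ k ih =>
      rw [Finset.sum_range_succ]
      have h3 : ‖x (m + (k + 1)) - x m‖ ≤
          ‖x (m + (k + 1)) - x (m + k)‖ + ‖x (m + k) - x m‖ := by
        have := dist_triangle (x (m + (k + 1))) (x (m + k)) (x m)
        simpa [dist_eq_norm] using this
      have h4 : ‖x (m + (k + 1)) - x (m + k)‖ = |c (m + k)| := by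
        have := hstep (m + k)
        rwa [show m + k + 1 = m + (k + 1) by ring] at this
      calc ‖x (m + (k + 1)) - x m‖ ≤ ‖x (m + (k + 1)) - x (m + k)‖ + ‖x (m + k) - x m‖ := h3
        _ ≤ |c (m + k)| + ∑ jj ∈ Finset.range k, |c (m + jj)| := by
            rw [h4]; exact add_le_add_right ih _
        _ = ∑ jj ∈ Finset.range k, |c (m + jj)| + |c (m + k)| := by ring
  have hinner : ∀ j : Fin d, Tendsto (fun m => ⟪x m, ν j⟫) atTop (nhds 0) := by
    intro j
    rw [Metric.tendsto_atTop]
    intro ε hε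
    have hb : 0 < ε / (d + 1) := by positivity
    obtain ⟨N, hN⟩ := (Metric.tendsto_atTop.mp habs) (ε / (d + 1)) hb
    have hbound : ∀ n, N ≤ n → |c n| < ε / (d + 1) := by
      intro n hn
      have := hN n hn
      rwa [Real.dist_eq, sub_zero, abs_abs] at this
    refine ⟨N, fun m hm => ?_⟩
    set k := (j.val + (d - (m + 1) % d)) % d with hk
    have hkd : k < d := Nat.mod_lt _ hd
    have hin : i (m + k) = j := by
      apply Fin.ext
      exact aux_mod d j.val m hd j.isLt
    have hcn : ⟪x (m + k), ν j⟫ = c (m + k) := by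
      show (⟪x (m + k), ν j⟫ : ℝ) = ⟪x (m + k), ν (i (m + k))⟫
      rw [hin]
    have h1 : |⟪x m, ν j⟫ - ⟪x (m + k), ν j⟫| ≤ ‖x (m + k) - x m‖ := by
      rw [← inner_sub_left]
      calc |⟪x m - x (m + k), ν j⟫| ≤ ‖x m - x (m + k)‖ * ‖ν j‖ :=
            abs_real_inner_le_norm _ _
        _ = ‖x (m + k) - x m‖ := by rw [hunit, norm_sub_rev]; ring
    have h3 : ∑ jj ∈ Finset.range k, |c (m + jj)| ≤ k * (ε / (d + 1)) := by
      calc ∑ jj ∈ Finset.range k, |c (m + jj)|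
          ≤ ∑ jj ∈ Finset.range k, ε / (d + 1) :=
            Finset.sum_le_sum fun jj _ => le_of_lt (hbound _ (by omega))
        _ = k * (ε / (d + 1)) := by simp [Finset.sum_const, mul_comm]
    have h4 : |c (m + k)| < ε / (d + 1) := hbound _ (by omega)
    rw [Real.dist_eq, sub_zero]
    have h5 : |⟪x m, ν j⟫| ≤ |⟪x m, ν j⟫ - ⟪x (m + k), ν j⟫| + |⟪x (m + k), ν j⟫| := by
      have := abs_add_le (⟪x m, ν j⟫ - ⟪x (m + k), ν j⟫) ⟪x (m + k), ν j⟫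
      simpa using this
    have hkd1 : (k : ℝ) + 1 ≤ d := by exact_mod_cast hkd
    have hd1 : (d : ℝ) < d + 1 := by linarith
    calc |⟪x m, ν j⟫| ≤ |⟪x m, ν j⟫ - ⟪x (m + k), ν j⟫| + |⟪x (m + k), ν j⟫| := h5
      _ ≤ ‖x (m + k) - x m‖ + |c (m + k)| :=
          add_le_add h1 (le_of_eq (congrArg abs hcn))
      _ ≤ k * (ε / (d + 1)) + |c (m + k)| := add_le_add_left ((htel m k).trans h3) _
      _ < k * (ε / (d + 1)) + ε / (d + 1) := by linarith
      _ = ((k : ℝ) + 1) * (ε / (d + 1)) := by ring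
      _ ≤ (d : ℝ) * (ε / (d + 1)) := by
          apply mul_le_mul_of_nonneg_right hkd1 (le_of_lt hb)
      _ < ε := by
          rw [div_eq_mul_inv]
          have : (0:ℝ) < (d:ℝ) + 1 := by positivity
          rw [mul_comm (ε) _, ← mul_assoc]
          calc (d:ℝ) * ((d:ℝ)+1)⁻¹ * ε < 1 * ε := by
                apply mul_lt_mul_of_pos_right _ hε
                rw [mul_inv_lt_iff₀ this]  -- d * (d+1)⁻¹ < 1 ↔ d < 1*(d+1)?
                linarith
            _ = ε := one_mul ε
  -- now conclude via the linear equivalence y ↦ (⟪ν j, y⟫)_j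
  have hcard : Fintype.card (Fin d) = Module.finrank ℝ (EuclideanSpace ℝ (Fin d)) := by
    simp [finrank_euclideanSpace]
  haveI : Nonempty (Fin d) := ⟨⟨0, hd⟩⟩
  let b : Module.Basis (Fin d) ℝ (EuclideanSpace ℝ (Fin d)) := basisOfLinearIndependentOfCardEqFinrank hli hcard
  have hbν : ⇑b = ν := coe_basisOfLinearIndependentOfCardEqFinrank hli hcard
  let T : EuclideanSpace ℝ (Fin d) →ₗ[ℝ] (Fin d → ℝ) := LinearMap.pi fun j => innerₛₗ ℝ (ν j)
  have hTapp : ∀ (y : EuclideanSpace ℝ (Fin d)) (j : Fin d), T y j = ⟪ν j, y⟫ := fun y j => rfl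
  have hTinj : Function.Injective T := by
    rw [← LinearMap.ker_eq_bot, LinearMap.ker_eq_bot']
    intro y hy
    have hy' : ∀ j, ⟪ν j, y⟫ = 0 := fun j => congrFun hy j
    have hrepr : ∑ j, b.repr y j • b j = y := b.sum_repr y
    have : ⟪y, y⟫ = 0 := by
      nth_rewrite 1 [← hrepr]
      rw [sum_inner]
      apply Finset.sum_eq_zero
      intro j _
      rw [real_inner_smul_left, hbν, hy', mul_zero]
    exact inner_self_eq_zero.mp this
  have hfr : Module.finrank ℝ (EuclideanSpace ℝ (Fin d)) = Module.finrank ℝ (Fin d → ℝ) := by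
    simp [finrank_euclideanSpace]
  let e : EuclideanSpace ℝ (Fin d) ≃ₗ[ℝ] (Fin d → ℝ) := LinearMap.linearEquivOfInjective T hTinj hfr
  have heapp : ∀ y : EuclideanSpace ℝ (Fin d), e y = T y := fun y =>
    LinearMap.linearEquivOfInjective_apply hTinj hfr y
  let ec : EuclideanSpace ℝ (Fin d) ≃L[ℝ] (Fin d → ℝ) := e.toContinuousLinearEquiv
  have hTx : Tendsto (fun m => ec (x m)) atTop (nhds 0) := by
    rw [tendsto_pi_nhds]
    intro j
    have : (fun m => ec (x m) j) = fun m => ⟪x m, ν j⟫ := by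
      funext m
      show e (x m) j = _
      rw [heapp, hTapp, real_inner_comm]
    rw [this]
    simpa using hinner j
  have h2 := (ec.symm.continuous.tendsto 0).comp hTx
  simpa [Function.comp_def] using h2
end

section
/- Let H be a hyperplane with unit normal ν, and let ω ⊂ H_- be a bounded measurable set such that for every z ∈ H, the closure of ∂*ω meets the open ray {z + tν : t < 0} in at most one point. Then ω is essentially open, i.e., ω is Lebesgue-equivalent to an open set. -/
open MeasureTheory Metric Filter Set
open scoped RealInnerProductSpace Topology ENNReal symmDiff

lemma aux_inner_add_smul {d : ℕ} {ν : EuclideanSpace ℝ (Fin d)} (hν : ‖ν‖ = 1)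
    (x : EuclideanSpace ℝ (Fin d)) (t : ℝ) : ⟪x + t • ν, ν⟫ = ⟪x, ν⟫ + t := by
  rw [inner_add_left, real_inner_smul_left, real_inner_self_eq_norm_mul_norm, hν]
  ring

lemma null_of_injective_line {d : ℕ} (ν : EuclideanSpace ℝ (Fin d)) (hν : ‖ν‖ = 1)
    (S : Set (EuclideanSpace ℝ (Fin d))) (hS : MeasurableSet S)
    (hb : Bornology.IsBounded S)
    (h : ∀ x ∈ S, ∀ t : ℝ, x + t • ν ∈ S → t = 0) : volume S = 0 := by
  by_contra h0
  obtain ⟨M, hM⟩ := hb.subset_closedBall 0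
  set F : ℕ → Set (EuclideanSpace ℝ (Fin d)) :=
    fun n => (fun x => (1 / ((n : ℝ) + 1)) • ν + x) ⁻¹' S with hF
  have hFd : Pairwise (Function.onFun Disjoint F) := by
    intro n m hnm
    refine Set.disjoint_left.2 fun x hxn hxm => hnm ?_
    simp only [hF, mem_preimage] at hxn hxm
    have ht := h _ hxn ((1 / ((m : ℝ) + 1)) - (1 / ((n : ℝ) + 1))) ?_
    · have h1 : (1 / ((n : ℝ) + 1)) = (1 / ((m : ℝ) + 1)) := by linarith
      have hn : ((n : ℝ)) + 1 ≠ 0 := by positivity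
      have hm : ((m : ℝ)) + 1 ≠ 0 := by positivity
      field_simp at h1
      exact_mod_cast (by linarith : (n:ℝ) = m)
    · have : (1 / ((n : ℝ) + 1)) • ν + x + ((1 / ((m : ℝ) + 1)) - (1 / ((n : ℝ) + 1))) • ν
          = (1 / ((m : ℝ) + 1)) • ν + x := by module
      rw [this]; exact hxm
  have hFm : ∀ n, MeasurableSet (F n) := fun n =>
    hS.preimage (measurable_const_add _)
  have hFv : ∀ n, volume (F n) = volume S := fun n =>
    measure_preimage_add volume _ S
  have hFb : ∀ n, F n ⊆ closedBall 0 (M + 1) := by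
    intro n x hx
    simp only [hF, mem_preimage] at hx
    have h1 : ‖(1 / ((n : ℝ) + 1)) • ν + x‖ ≤ M := by
      simpa [dist_eq_norm] using hM hx
    have h2 : ‖(1 / ((n : ℝ) + 1)) • ν‖ ≤ 1 := by
      rw [norm_smul, hν, mul_one, Real.norm_eq_abs]
      rw [abs_of_nonneg (by positivity)]
      rw [div_le_one (by positivity)]
      linarith [Nat.cast_nonneg (α := ℝ) n]
    have hx2 : x = ((1 / ((n : ℝ) + 1)) • ν + x) - (1 / ((n : ℝ) + 1)) • ν := by abel
    simp only [mem_closedBall, dist_eq_norm, sub_zero]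
    rw [hx2]
    exact le_trans (norm_sub_le _ _) (add_le_add h1 h2)
  have htop : volume (⋃ n, F n) = ⊤ := by
    rw [measure_iUnion hFd hFm]
    simp only [hFv]
    exact ENNReal.tsum_const_eq_top_of_ne_zero h0
  have hle : volume (⋃ n, F n) ≤ volume (closedBall (0 : EuclideanSpace ℝ (Fin d)) (M + 1)) :=
    measure_mono (iUnion_subset hFb)
  rw [htop, top_le_iff] at hle
  exact (measure_closedBall_lt_top (x := (0 : EuclideanSpace ℝ (Fin d))) (r := M + 1)).ne hle

lemma hyperplane_null {d : ℕ} (ν : EuclideanSpace ℝ (Fin d)) (hν : ‖ν‖ = 1) (a : ℝ) :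
    volume {x : EuclideanSpace ℝ (Fin d) | ⟪x, ν⟫ = a} = 0 := by
  have hcont : Continuous fun x : EuclideanSpace ℝ (Fin d) => ⟪x, ν⟫ :=
    continuous_id.inner continuous_const
  have hdecomp : {x : EuclideanSpace ℝ (Fin d) | ⟪x, ν⟫ = a} =
      ⋃ n : ℕ, ({x | ⟪x, ν⟫ = a} ∩ closedBall 0 n) := by
    ext x
    simp only [Set.mem_iUnion, Set.mem_inter_iff, Set.mem_setOf_eq, mem_closedBall,
      dist_zero_right]
    constructor
    · intro hx
      obtain ⟨n, hn⟩ := exists_nat_ge ‖x‖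
      exact ⟨n, hx, hn⟩
    · rintro ⟨n, hn, -⟩; exact hn
  rw [hdecomp]
  refine measure_iUnion_null fun n => ?_
  refine null_of_injective_line ν hν _ (((isClosed_eq hcont continuous_const).measurableSet).inter
    measurableSet_closedBall) (isBounded_closedBall.subset Set.inter_subset_right) ?_
  rintro x ⟨hx, -⟩ t ⟨hxt, -⟩
  have h1 : ⟪x + t • ν, ν⟫ = ⟪x, ν⟫ + t := aux_inner_add_smul hν x t
  simp only [Set.mem_setOf_eq] at hx hxt
  rw [hx, hxt] at h1
  linarith

lemma posUpperDensity_mem_closure {d : ℕ} {ω : Set (EuclideanSpace ℝ (Fin d))}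
    {x : EuclideanSpace ℝ (Fin d)} (hx : posUpperDensity ω x) : x ∈ closure ω := by
  by_contra hcl
  obtain ⟨ε, hε, hball⟩ := Metric.isOpen_iff.1 isClosed_closure.isOpen_compl x hcl
  have hev : ∀ᶠ ρ in 𝓝[>] (0 : ℝ),
      (volume (ω ∩ ball x ρ) / volume (ball x ρ) : ℝ≥0∞) = 0 := by
    filter_upwards [Ioo_mem_nhdsGT_of_mem (⟨le_refl (0:ℝ), hε⟩ : (0:ℝ) ∈ Ico 0 ε)]
    intro ρ hρ
    have : ω ∩ ball x ρ = ∅ := by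
      ext w
      simp only [mem_inter_iff, mem_empty_iff_false, iff_false, not_and]
      intro hw hwb
      exact hball (ball_subset_ball hρ.2.le hwb) (subset_closure hw)
    simp [this]
  have hle : Filter.limsup
      (fun ρ : ℝ => volume (ω ∩ ball x ρ) / volume (ball x ρ)) (𝓝[>] (0:ℝ)) ≤ 0 :=
    Filter.limsup_le_of_le (by isBoundedDefault) (hev.mono fun ρ h => h.le)
  exact absurd (lt_of_lt_of_le hx hle) (lt_irrefl _)

lemma essBoundary_subset_closure {d : ℕ} (ω : Set (EuclideanSpace ℝ (Fin d))) :
    essBoundary ω ⊆ closure ω := fun _ hx => posUpperDensity_mem_closure hx.1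

lemma aux_ball_volume {d : ℕ} (x : EuclideanSpace ℝ (Fin d)) {s : ℝ} (hs : 0 < s) :
    volume (ball x s) = ENNReal.ofReal (s ^ d)
      * volume (ball (0 : EuclideanSpace ℝ (Fin d)) 1) := by
  rw [Measure.addHaar_ball_of_pos volume x hs, finrank_euclideanSpace_fin]

lemma continuous_volume_inter_ball {d : ℕ} (ω : Set (EuclideanSpace ℝ (Fin d)))
    {r : ℝ} (hr : 0 < r) :
    Continuous fun x : EuclideanSpace ℝ (Fin d) => (volume (ω ∩ ball x r)).toReal := by
  set c := volume (ball (0 : EuclideanSpace ℝ (Fin d)) 1) with hc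
  have hct : c ≠ ⊤ := measure_ball_lt_top.ne
  set g := fun x : EuclideanSpace ℝ (Fin d) => (volume (ω ∩ ball x r)).toReal with hg
  have hfin : ∀ (x : EuclideanSpace ℝ (Fin d)) (s : ℝ), volume (ω ∩ ball x s) ≠ ⊤ :=
    fun x s => (lt_of_le_of_lt (measure_mono inter_subset_right) measure_ball_lt_top).ne
  have key : ∀ x y : EuclideanSpace ℝ (Fin d),
      g x ≤ g y + ((r + dist x y) ^ d * c.toReal - r ^ d * c.toReal) := by
    intro x y
    set δ := dist x y with hδ
    have hδ0 : 0 ≤ δ := dist_nonneg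
    have hsub : ω ∩ ball x r ⊆ (ω ∩ ball y r) ∪ (ball y (r + δ) \ ball y r) := by
      rintro w ⟨hw, hwx⟩
      by_cases hwy : w ∈ ball y r
      · exact Or.inl ⟨hw, hwy⟩
      · refine Or.inr ⟨?_, hwy⟩
        rw [mem_ball] at hwx ⊢
        calc dist w y ≤ dist w x + dist x y := dist_triangle _ _ _
        _ < r + δ := by rw [hδ]; linarith
    have h1 : volume (ω ∩ ball x r) ≤ volume (ω ∩ ball y r)
        + volume (ball y (r + δ) \ ball y r) :=
      le_trans (measure_mono hsub) (measure_union_le _ _)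
    have h2 : volume (ball y (r + δ) \ ball y r)
        = ENNReal.ofReal ((r + δ) ^ d) * c - ENNReal.ofReal (r ^ d) * c := by
      rw [measure_diff (ball_subset_ball (by linarith)) measurableSet_ball.nullMeasurableSet
        measure_ball_lt_top.ne, aux_ball_volume y (by linarith), aux_ball_volume y hr]
    have hBle : ENNReal.ofReal (r ^ d) * c ≤ ENNReal.ofReal ((r + δ) ^ d) * c :=
      mul_le_mul_left (ENNReal.ofReal_le_ofReal
        (pow_le_pow_left₀ (le_of_lt hr) (by linarith) d)) c
    have h3 : (volume (ball y (r + δ) \ ball y r)).toReal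
        = (r + δ) ^ d * c.toReal - r ^ d * c.toReal := by
      rw [h2, ENNReal.toReal_sub_of_le hBle (ENNReal.mul_ne_top ENNReal.ofReal_ne_top hct),
        ENNReal.toReal_mul, ENNReal.toReal_mul,
        ENNReal.toReal_ofReal (by positivity), ENNReal.toReal_ofReal (by positivity)]
    calc g x ≤ (volume (ω ∩ ball y r) + volume (ball y (r + δ) \ ball y r)).toReal := by
          apply ENNReal.toReal_le_toReal (hfin x r) ?_ |>.mpr h1
          exact ENNReal.add_ne_top.mpr ⟨hfin y r,
            (lt_of_le_of_lt (measure_mono diff_subset) measure_ball_lt_top).ne⟩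
    _ = g y + (volume (ball y (r + δ) \ ball y r)).toReal := by
          rw [ENNReal.toReal_add (hfin y r)
            (lt_of_le_of_lt (measure_mono diff_subset) measure_ball_lt_top).ne]
    _ = g y + ((r + δ) ^ d * c.toReal - r ^ d * c.toReal) := by rw [h3]
  rw [continuous_iff_continuousAt]
  intro x
  rw [ContinuousAt, tendsto_iff_dist_tendsto_zero]
  have hφ : Tendsto (fun y : EuclideanSpace ℝ (Fin d) =>
      (r + dist y x) ^ d * c.toReal - r ^ d * c.toReal) (𝓝 x) (𝓝 0) := by
    have hcont : Continuous (fun y : EuclideanSpace ℝ (Fin d) =>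
        (r + dist y x) ^ d * c.toReal - r ^ d * c.toReal) := by
      continuity
    have := hcont.tendsto x
    simpa using this
  apply squeeze_zero (fun y => dist_nonneg) ?_ hφ
  intro y
  rw [Real.dist_eq, abs_sub_le_iff]
  constructor
  · have := key y x
    rw [dist_comm y x] at *
    linarith [key y x]
  · have := key x y
    rw [dist_comm x y] at this
    linarith

lemma exists_good_ball {d : ℕ} (hd : 0 < d) (ω : Set (EuclideanSpace ℝ (Fin d)))
    (hmeas : MeasurableSet ω) (c₀ : EuclideanSpace ℝ (Fin d)) {s : ℝ} (hs : 0 < s)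
    (hpos : volume (ω ∩ ball c₀ s) ≠ 0) (hneg : volume (ball c₀ s \ ω) ≠ 0)
    {ε : ℝ} (hε : 0 < ε) :
    ∃ m r, 0 < r ∧ r ≤ ε ∧ dist m c₀ + 9 * r < s ∧
      volume (ball m r) ≤ 4 * volume (ω ∩ ball m r) ∧
      volume (ball m r) ≤ 4 * volume (ball m r \ ω) := by
  haveI : Nontrivial (EuclideanSpace ℝ (Fin d)) :=
    Module.nontrivial_of_finrank_pos (R := ℝ)
      (by rw [finrank_euclideanSpace_fin]; exact hd)
  set c := volume (ball (0 : EuclideanSpace ℝ (Fin d)) 1) with hc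
  have hc0 : c ≠ 0 := (measure_ball_pos volume _ one_pos).ne'
  have hct : c ≠ ⊤ := measure_ball_lt_top.ne
  -- spheres are null, so closed balls and open balls agree in measure
  have hsph : ∀ (x : EuclideanSpace ℝ (Fin d)) (ρ : ℝ), volume (sphere x ρ) = 0 :=
    fun x ρ => Measure.addHaar_sphere volume x ρ
  have hcb : ∀ (A : Set (EuclideanSpace ℝ (Fin d))) (x : EuclideanSpace ℝ (Fin d)) (ρ : ℝ),
      volume (A ∩ closedBall x ρ) = volume (A ∩ ball x ρ) := by
    intro A x ρ
    apply le_antisymm ?_ (measure_mono (inter_subset_inter_right _ ball_subset_closedBall))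
    have : A ∩ closedBall x ρ ⊆ (A ∩ ball x ρ) ∪ sphere x ρ := by
      rintro w ⟨hw, hwc⟩
      rw [← ball_union_sphere] at hwc
      rcases hwc with hwb | hws
      · exact Or.inl ⟨hw, hwb⟩
      · exact Or.inr hws
    refine le_trans (measure_mono this) ?_
    refine le_trans (measure_union_le _ _) ?_
    rw [hsph, add_zero]
  have hcbb : ∀ (x : EuclideanSpace ℝ (Fin d)) (ρ : ℝ),
      volume (closedBall x ρ) = volume (ball x ρ) := by
    intro x ρ
    have := hcb univ x ρ
    simpa using this
  -- density points
  have hae := Besicovitch.ae_tendsto_measure_inter_div_of_measurableSet volume hmeas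
  set good := {x : EuclideanSpace ℝ (Fin d) | Tendsto
      (fun ρ => volume (ω ∩ closedBall x ρ) / volume (closedBall x ρ)) (𝓝[>] 0)
      (𝓝 (ω.indicator 1 x))} with hgood
  have hgood0 : volume goodᶜ = 0 := by
    rw [hgood]
    exact ae_iff.1 hae
  have hfind : ∀ (A : Set (EuclideanSpace ℝ (Fin d))), volume A ≠ 0 →
      ∃ p ∈ A, p ∈ good := by
    intro A hA
    have h1 : volume (A \ good) = 0 :=
      measure_mono_null (fun x hx => hx.2) hgood0
    have h2 : volume (A ∩ good) ≠ 0 := by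
      intro h0
      apply hA
      have hsub : A ⊆ (A ∩ good) ∪ (A \ good) := by rw [inter_union_diff]
      have hle : volume A ≤ volume (A ∩ good) + volume (A \ good) :=
        le_trans (measure_mono hsub) (measure_union_le _ _)
      rw [h0, h1, add_zero] at hle
      exact le_antisymm hle zero_le
    obtain ⟨p, hp⟩ := nonempty_of_measure_ne_zero h2
    exact ⟨p, hp.1, hp.2⟩
  -- pick density points p and q
  obtain ⟨p, hpA, hpg⟩ := hfind _ hpos
  obtain ⟨q, hqA, hqg⟩ := hfind _ hneg
  have hp : Tendsto (fun ρ => volume (ω ∩ closedBall p ρ) / volume (closedBall p ρ))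
      (𝓝[>] (0:ℝ)) (𝓝 1) := by
    have := hpg
    rw [hgood, mem_setOf_eq, Set.indicator_of_mem hpA.1] at this
    simpa using this
  have hq : Tendsto (fun ρ => volume (ω ∩ closedBall q ρ) / volume (closedBall q ρ))
      (𝓝[>] (0:ℝ)) (𝓝 0) := by
    have := hqg
    rw [hgood, mem_setOf_eq, Set.indicator_of_notMem hqA.2] at this
    simpa using this
  -- choose the common radius r
  set D := max (dist p c₀) (dist q c₀) with hD
  have hDs : D < s := by
    rw [hD]
    exact max_lt (mem_ball.1 hpA.2) (mem_ball.1 hqA.1)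
  have hD0 : 0 ≤ D := le_trans dist_nonneg (le_max_left _ _)
  have hev1 := hp.eventually (eventually_gt_nhds (by rw [ENNReal.div_lt_iff (by norm_num) (by norm_num)]; norm_num : (3/4 : ℝ≥0∞) < 1))
  have hev2 := hq.eventually (eventually_lt_nhds (ENNReal.div_pos one_ne_zero (by norm_num) : (0 : ℝ≥0∞) < 1/4))
  have hev3 : Ioo (0:ℝ) (min ε ((s - D)/9)) ∈ 𝓝[>] (0:ℝ) :=
    Ioo_mem_nhdsGT_of_mem ⟨le_refl _, by
      apply lt_min hε
      linarith⟩
  obtain ⟨r, ⟨hev1r, hev2r⟩, hr0, hrlt⟩ := ((hev1.and hev2).and hev3).exists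
  have hrε : r ≤ ε := le_of_lt (lt_of_lt_of_le hrlt (min_le_left _ _))
  have hr9 : r < (s - D) / 9 := lt_of_lt_of_le hrlt (min_le_right _ _)
  set V := r ^ d * c.toReal with hV
  have hVpos : 0 < V := mul_pos (pow_pos hr0 d) (ENNReal.toReal_pos hc0 hct)
  have hbvol : ∀ x : EuclideanSpace ℝ (Fin d),
      volume (ball x r) = ENNReal.ofReal (r ^ d) * c := fun x => aux_ball_volume x hr0
  have hbfin : ∀ x : EuclideanSpace ℝ (Fin d), volume (ball x r) ≠ ⊤ :=
    fun x => measure_ball_lt_top.ne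
  have hbne : ∀ x : EuclideanSpace ℝ (Fin d), volume (ball x r) ≠ 0 :=
    fun x => (measure_ball_pos volume x hr0).ne'
  have hbtoReal : ∀ x : EuclideanSpace ℝ (Fin d), (volume (ball x r)).toReal = V := by
    intro x
    rw [hbvol, ENNReal.toReal_mul, ENNReal.toReal_ofReal (pow_nonneg hr0.le d)]
  set g := fun x : EuclideanSpace ℝ (Fin d) => (volume (ω ∩ ball x r)).toReal with hg
  have hgfin : ∀ x : EuclideanSpace ℝ (Fin d), volume (ω ∩ ball x r) ≠ ⊤ :=
    fun x => (lt_of_le_of_lt (measure_mono inter_subset_right) measure_ball_lt_top).ne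
  have hq34 : (3 / 4 : ℝ≥0∞).toReal = 3 / 4 := by
    rw [ENNReal.toReal_div]; norm_num
  have hq14 : (1 / 4 : ℝ≥0∞).toReal = 1 / 4 := by
    rw [ENNReal.toReal_div]; norm_num
  have hgp : 3 / 4 * V ≤ g p := by
    have h4 : ¬ (volume (ω ∩ closedBall p r) ≤ 3 / 4 * volume (closedBall p r)) := by
      intro hcon
      exact absurd (ENNReal.div_le_of_le_mul hcon) (not_le.2 hev1r)
    push_neg at h4
    rw [hcb, hcbb] at h4
    have h5 := (ENNReal.toReal_le_toReal (by
        exact ENNReal.mul_ne_top (by simp [ENNReal.div_eq_top]) (hbfin p)) (hgfin p)).mpr h4.le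
    rw [ENNReal.toReal_mul, hq34, hbtoReal] at h5
    exact h5
  have hgq : g q ≤ 1 / 4 * V := by
    have h4 : volume (ω ∩ closedBall q r) < 1 / 4 * volume (closedBall q r) := by
      rw [← ENNReal.div_lt_iff (Or.inl (by rw [hcbb]; exact hbne q))
        (Or.inl (by rw [hcbb]; exact hbfin q))]
      exact hev2r
    rw [hcb, hcbb] at h4
    have h5 := (ENNReal.toReal_le_toReal (hgfin q) (by
        exact ENNReal.mul_ne_top (by simp [ENNReal.div_eq_top]) (hbfin q))).mpr h4.le
    rw [ENNReal.toReal_mul, hq14, hbtoReal] at h5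
    exact h5
  -- intermediate value theorem along the segment from p to q
  set γ : ℝ → EuclideanSpace ℝ (Fin d) := fun θ => p + θ • (q - p) with hγ
  have hγc : Continuous γ := continuous_const.add (continuous_id.smul continuous_const)
  have hgc : Continuous (g ∘ γ) := (continuous_volume_inter_ball ω hr0).comp hγc
  have hγ0 : γ 0 = p := by simp [hγ]
  have hγ1 : γ 1 = q := by simp [hγ]
  have hmid : V / 2 ∈ Icc ((g ∘ γ) 1) ((g ∘ γ) 0) := by
    constructor
    · simp only [Function.comp_apply, hγ1]; linarith
    · simp only [Function.comp_apply, hγ0]; linarith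
  obtain ⟨θ, hθI, hθ⟩ := intermediate_value_Icc' zero_le_one hgc.continuousOn hmid
  refine ⟨γ θ, r, hr0, hrε, ?_, ?_, ?_⟩
  · have hp' : ‖p - c₀‖ ≤ D := by rw [← dist_eq_norm]; exact le_max_left _ _
    have hq' : ‖q - c₀‖ ≤ D := by rw [← dist_eq_norm]; exact le_max_right _ _
    have hexp : γ θ - c₀ = (1 - θ) • (p - c₀) + θ • (q - c₀) := by
      rw [hγ]; module
    have hdm : dist (γ θ) c₀ ≤ D := by
      rw [dist_eq_norm, hexp]
      refine le_trans (norm_add_le _ _) ?_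
      rw [norm_smul, norm_smul, Real.norm_eq_abs, Real.norm_eq_abs,
        abs_of_nonneg (by linarith [hθI.2] : (0:ℝ) ≤ 1 - θ), abs_of_nonneg hθI.1]
      nlinarith [hθI.1, hθI.2, norm_nonneg (p - c₀), norm_nonneg (q - c₀)]
    linarith
  · have hθ' : (volume (ω ∩ ball (γ θ) r)).toReal = V / 2 := hθ
    apply (ENNReal.toReal_le_toReal (hbfin _)
      (ENNReal.mul_ne_top (by simp) (hgfin _))).mp
    rw [ENNReal.toReal_mul, hbtoReal, hθ']
    norm_num
    linarith
  · have heq := measure_inter_add_diff (μ := volume) (ball (γ θ) r) hmeas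
    rw [inter_comm] at heq
    have hdfin : volume (ball (γ θ) r \ ω) ≠ ⊤ :=
      (lt_of_le_of_lt (measure_mono diff_subset) measure_ball_lt_top).ne
    have hdtoReal : (volume (ball (γ θ) r \ ω)).toReal = V / 2 := by
      have h6 := congrArg ENNReal.toReal heq
      rw [ENNReal.toReal_add (hgfin _) hdfin, hbtoReal] at h6
      have hθ' : (volume (ω ∩ ball (γ θ) r)).toReal = V / 2 := hθ
      linarith
    apply (ENNReal.toReal_le_toReal (hbfin _)
      (ENNReal.mul_ne_top (by simp) hdfin)).mp
    rw [ENNReal.toReal_mul, hbtoReal, hdtoReal]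
    norm_num
    linarith

lemma pos_upper_density_of_seq {d : ℕ} (A : Set (EuclideanSpace ℝ (Fin d)))
    (z : EuclideanSpace ℝ (Fin d)) (t : ℕ → ℝ) (κ : ℝ≥0∞) (hκ : 0 < κ)
    (ht0 : ∀ n, 0 < t n) (htlim : Tendsto t atTop (𝓝 0))
    (hbd : ∀ n, κ * volume (ball z (t n)) ≤ volume (A ∩ ball z (t n))) :
    posUpperDensity A z := by
  set u := fun ρ : ℝ => volume (A ∩ ball z ρ) / volume (ball z ρ) with hu
  have htT : Tendsto t atTop (𝓝[>] (0:ℝ)) := by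
    rw [tendsto_nhdsWithin_iff]
    exact ⟨htlim, Eventually.of_forall fun n => ht0 n⟩
  have hun : ∀ n, κ ≤ u (t n) := by
    intro n
    rw [hu]
    rw [ENNReal.le_div_iff_mul_le (Or.inl (measure_ball_pos volume z (ht0 n)).ne')
      (Or.inl measure_ball_lt_top.ne)]
    exact hbd n
  have h1 : κ ≤ limsup (u ∘ t) atTop := by
    have : κ = limsup (fun _ : ℕ => κ) atTop := (limsup_const κ).symm
    rw [this]
    exact limsup_le_limsup (Eventually.of_forall hun)
  have h2 : limsup (u ∘ t) atTop ≤ limsup u (𝓝[>] (0:ℝ)) := by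
    rw [Filter.limsup_comp u t]
    exact limsup_le_limsup_of_le htT
  exact lt_of_lt_of_le hκ (le_trans h1 h2)

lemma null_or_null_of_no_essBoundary {d : ℕ} (hd : 0 < d)
    (ω : Set (EuclideanSpace ℝ (Fin d))) (hmeas : MeasurableSet ω)
    (x₀ : EuclideanSpace ℝ (Fin d)) {R : ℝ} (hR : 0 < R)
    (hdisj : ∀ y ∈ ball x₀ R, y ∉ essBoundary ω) :
    volume (ω ∩ ball x₀ R) = 0 ∨ volume (ball x₀ R \ ω) = 0 := by
  by_contra hcon
  push_neg at hcon
  obtain ⟨hA, hB⟩ := hcon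
  set c := volume (ball (0 : EuclideanSpace ℝ (Fin d)) 1) with hc
  have hc0 : c ≠ 0 := by
    haveI : Nontrivial (EuclideanSpace ℝ (Fin d)) :=
      Module.nontrivial_of_finrank_pos (R := ℝ)
        (by rw [finrank_euclideanSpace_fin]; exact hd)
    exact (measure_ball_pos volume _ one_pos).ne'
  have hct : c ≠ ⊤ := measure_ball_lt_top.ne
  -- the invariant
  set Inv : EuclideanSpace ℝ (Fin d) × ℝ → Prop := fun z => 0 < z.2 ∧
    volume (ball z.1 z.2) ≤ 4 * volume (ω ∩ ball z.1 z.2) ∧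
    volume (ball z.1 z.2) ≤ 4 * volume (ball z.1 z.2 \ ω) with hInvdef
  have hInvne : ∀ z, Inv z → volume (ω ∩ ball z.1 z.2) ≠ 0 ∧
      volume (ball z.1 z.2 \ ω) ≠ 0 := by
    rintro z ⟨hz1, hz2, hz3⟩
    constructor
    · intro h0
      rw [h0, mul_zero] at hz2
      exact (measure_ball_pos volume z.1 hz1).ne' (le_antisymm hz2 zero_le)
    · intro h0
      rw [h0, mul_zero] at hz3
      exact (measure_ball_pos volume z.1 hz1).ne' (le_antisymm hz3 zero_le)
  have step : ∀ z : EuclideanSpace ℝ (Fin d) × ℝ, Inv z →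
      ∃ w : EuclideanSpace ℝ (Fin d) × ℝ, Inv w ∧ w.2 ≤ z.2 / 2 ∧
        dist w.1 z.1 + 9 * w.2 < z.2 := by
    rintro z hz
    obtain ⟨m, r, h1, h2, h3, h4, h5⟩ := exists_good_ball hd ω hmeas z.1 hz.1
      (hInvne z hz).1 (hInvne z hz).2 (half_pos hz.1)
    exact ⟨(m, r), ⟨h1, h4, h5⟩, h2, h3⟩
  -- the initial ball
  obtain ⟨m₀, r₀, h01, _, h03, h04, h05⟩ := exists_good_ball hd ω hmeas x₀ hR hA hB hR
  -- build the sequence of balls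
  choose F hF1 hF2 hF3 using step
  set H : EuclideanSpace ℝ (Fin d) × ℝ → EuclideanSpace ℝ (Fin d) × ℝ :=
    fun z => if h : Inv z then F z h else z with hH
  set seq : ℕ → EuclideanSpace ℝ (Fin d) × ℝ := fun n => H^[n] (m₀, r₀) with hseq
  set m : ℕ → EuclideanSpace ℝ (Fin d) := fun n => (seq n).1 with hm
  set r : ℕ → ℝ := fun n => (seq n).2 with hr
  have hseq0 : seq 0 = (m₀, r₀) := rfl
  have hiter : ∀ n, seq (n + 1) = H (seq n) := fun n =>
    Function.iterate_succ_apply' H n _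
  have hInvn : ∀ n, Inv (seq n) := by
    intro n
    induction n with
    | zero => rw [hseq0]; exact ⟨h01, h04, h05⟩
    | succ k ih =>
      rw [hiter k, hH]
      simp only [dif_pos ih]
      exact hF1 _ ih
  have hsucc : ∀ n, seq (n + 1) = F (seq n) (hInvn n) := by
    intro n
    rw [hiter n, hH]
    simp only [dif_pos (hInvn n)]
  have hrpos : ∀ n, 0 < r n := fun n => (hInvn n).1
  have hrhalf : ∀ n, r (n + 1) ≤ r n / 2 := by
    intro n
    have h := hF2 (seq n) (hInvn n)
    have : r (n + 1) = (F (seq n) (hInvn n)).2 := by rw [hr]; simp only; rw [hsucc n]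
    rw [this]
    exact h
  have hstep9 : ∀ n, dist (m (n + 1)) (m n) + 9 * r (n + 1) < r n := by
    intro n
    have h := hF3 (seq n) (hInvn n)
    have e1 : m (n + 1) = (F (seq n) (hInvn n)).1 := by rw [hm]; simp only; rw [hsucc n]
    have e2 : r (n + 1) = (F (seq n) (hInvn n)).2 := by rw [hr]; simp only; rw [hsucc n]
    rw [e1, e2]
    exact h
  have hdstep : ∀ n, dist (m (n + 1)) (m n) < r n := by
    intro n
    have h9 := hstep9 n
    have := hrpos (n + 1)
    linarith
  have hrgeom : ∀ n, r n ≤ r 0 * (1 / 2) ^ n := by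
    intro n
    induction n with
    | zero => simp
    | succ k ih =>
      have := hrhalf k
      calc r (k + 1) ≤ r k / 2 := this
      _ ≤ (r 0 * (1 / 2) ^ k) / 2 := by linarith
      _ = r 0 * (1 / 2) ^ (k + 1) := by ring
  have hcauchy : CauchySeq m := by
    apply cauchySeq_of_le_geometric (1 / 2) (r 0) (by norm_num)
    intro n
    rw [dist_comm]
    exact le_trans (hdstep n).le (hrgeom n)
  obtain ⟨z, hz⟩ := cauchySeq_tendsto_of_complete hcauchy
  -- dist z (m n) ≤ 2 r n
  have hkey : ∀ n N, dist (m (n + N)) (m n) ≤ 2 * (r n - r (n + N)) := by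
    intro n N
    induction N with
    | zero => simp
    | succ k ih =>
      have h1 : dist (m (n + k + 1)) (m n) ≤ dist (m (n + k + 1)) (m (n + k))
          + dist (m (n + k)) (m n) := dist_triangle _ _ _
      have h2 := hdstep (n + k)
      have h3 := hrhalf (n + k)
      have : n + (k + 1) = n + k + 1 := by omega
      rw [this]
      have h4 : r (n + k + 1) ≤ r (n + k) / 2 := h3
      have h5 : dist (m (n + k)) (m n) ≤ 2 * (r n - r (n + k)) := ih
      linarith
  have hdz : ∀ n, dist z (m n) ≤ 2 * r n := by
    intro n
    have hco : Tendsto (fun N : ℕ => N + n) atTop atTop := tendsto_add_atTop_nat n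
    have hzt : Tendsto (m ∘ fun N : ℕ => N + n) atTop (𝓝 z) := hz.comp hco
    have hdt : Tendsto (fun N => dist ((m ∘ fun N : ℕ => N + n) N) (m n)) atTop
        (𝓝 (dist z (m n))) := hzt.dist tendsto_const_nhds
    simp only [Function.comp_apply] at hdt
    apply le_of_tendsto hdt
    filter_upwards with N
    have hk := hkey n N
    rw [Nat.add_comm n N] at hk
    have hp := (hrpos (N + n)).le
    linarith
  -- the limit point is in the ball
  have hzball : z ∈ ball x₀ R := by
    have h1 : dist z x₀ ≤ dist z (m 0) + dist (m 0) x₀ := dist_triangle _ _ _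
    have h2 : dist z (m 0) ≤ 2 * r 0 := hdz 0
    have hm0 : m 0 = m₀ := rfl
    have hr0 : r 0 = r₀ := rfl
    rw [mem_ball]
    rw [hm0] at h2
    rw [hr0] at h2
    calc dist z x₀ ≤ dist z m₀ + dist m₀ x₀ := dist_triangle _ _ _
    _ ≤ 2 * r₀ + dist m₀ x₀ := by linarith
    _ < R := by linarith
  -- z is in the essential boundary: contradiction
  refine hdisj z hzball ?_
  have hrlim : Tendsto r atTop (𝓝 0) := by
    apply squeeze_zero (fun n => (hrpos n).le) hrgeom
    rw [← mul_zero (r 0)]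
    exact (tendsto_pow_atTop_nhds_zero_of_lt_one (by norm_num) (by norm_num)).const_mul (r 0)
  set t : ℕ → ℝ := fun n => 4 * r n with ht
  have ht0 : ∀ n, 0 < t n := fun n => by
    have := hrpos n; rw [ht]; simp only; linarith
  have htlim : Tendsto t atTop (𝓝 0) := by
    rw [ht, ← mul_zero (4:ℝ)]
    exact hrlim.const_mul 4
  have hballsub : ∀ n, ball (m n) (r n) ⊆ ball z (t n) := by
    intro n w hw
    rw [mem_ball] at hw ⊢
    have h1 : dist w z ≤ dist w (m n) + dist (m n) z := dist_triangle _ _ _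
    have h2 : dist (m n) z ≤ 2 * r n := by rw [dist_comm]; exact hdz n
    have := hrpos n
    rw [ht]
    simp only
    linarith
  -- volume comparison between ball z (t n) and ball (m n) (r n)
  have hvolcomp : ∀ n, volume (ball z (t n)) ≤
      ENNReal.ofReal (4 ^ d) * volume (ball (m n) (r n)) := by
    intro n
    rw [aux_ball_volume z (ht0 n), aux_ball_volume (m n) (hrpos n), ht]
    simp only
    rw [mul_pow, ENNReal.ofReal_mul (by positivity), mul_assoc]
  set κ : ℝ≥0∞ := (ENNReal.ofReal (4 ^ d) * 4)⁻¹ with hκ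
  have hκtop : ENNReal.ofReal (4 ^ d) * 4 ≠ ⊤ := ENNReal.mul_ne_top ENNReal.ofReal_ne_top (by simp)
  have hκ0' : ENNReal.ofReal (4 ^ d) * 4 ≠ 0 := by
    apply mul_ne_zero _ (by simp)
    rw [← ENNReal.ofReal_zero, Ne, ENNReal.ofReal_eq_ofReal_iff (by positivity) le_rfl]
    positivity
  have hκpos : 0 < κ := ENNReal.inv_pos.mpr hκtop
  have hdens : ∀ (A : Set (EuclideanSpace ℝ (Fin d))),
      (∀ n, volume (ball (m n) (r n)) ≤ 4 * volume (A ∩ ball (m n) (r n))) →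
      posUpperDensity A z := by
    intro A hbd
    apply pos_upper_density_of_seq A z t κ hκpos ht0 htlim
    intro n
    calc κ * volume (ball z (t n))
        ≤ κ * (ENNReal.ofReal (4 ^ d) * volume (ball (m n) (r n))) :=
          mul_le_mul_right (hvolcomp n) κ
    _ ≤ κ * (ENNReal.ofReal (4 ^ d) * (4 * volume (A ∩ ball (m n) (r n)))) :=
          mul_le_mul_right (mul_le_mul_right (hbd n) _) κ
    _ = (ENNReal.ofReal (4 ^ d) * 4)⁻¹ * (ENNReal.ofReal (4 ^ d) * 4)
          * volume (A ∩ ball (m n) (r n)) := by rw [hκ]; ring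
    _ = volume (A ∩ ball (m n) (r n)) := by
          rw [ENNReal.inv_mul_cancel hκ0' hκtop, one_mul]
    _ ≤ volume (A ∩ ball z (t n)) :=
          measure_mono (inter_subset_inter_right A (hballsub n))
  constructor
  · exact hdens ω fun n => (hInvn n).2.1
  · apply hdens ωᶜ
    intro n
    have := (hInvn n).2.2
    rw [diff_eq, inter_comm] at this
    exact this

/-- If `ω` is a bounded measurable subset of the lower halfspace `{⟪x, ν⟫ ≤ a}` such that
the closure of its essential boundary meets each open downward ray in at most one point,
then `ω` is essentially open: it coincides with an open set up to a Lebesgue null set. -/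
theorem stmt6 {d : ℕ} (ν : EuclideanSpace ℝ (Fin d)) (hν : ‖ν‖ = 1) (a : ℝ)
    (ω : Set (EuclideanSpace ℝ (Fin d))) (hmeas : MeasurableSet ω)
    (hbdd : Bornology.IsBounded ω)
    (hsub : ω ⊆ {x | ⟪x, ν⟫ ≤ a})
    (hray : ∀ z : EuclideanSpace ℝ (Fin d), ⟪z, ν⟫ = a →
      (closure (essBoundary ω) ∩ {p | ∃ t : ℝ, t < 0 ∧ p = z + t • ν}).Subsingleton) :
    ∃ U : Set (EuclideanSpace ℝ (Fin d)), IsOpen U ∧ volume (ω ∆ U) = 0 := by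
  -- the dimension is positive
  rcases Nat.eq_zero_or_pos d with hd | hd
  · exfalso
    subst hd
    have hν0 : ν = 0 := by ext i; exact i.elim0
    rw [hν0, norm_zero] at hν
    exact zero_ne_one hν
  have hν0 : ν ≠ 0 := by
    intro h
    rw [h, norm_zero] at hν
    exact zero_ne_one hν
  -- the closure of the essential boundary is null
  set N := closure (essBoundary ω) with hN
  have hNcl : IsClosed N := isClosed_closure
  have hNsub : N ⊆ closure ω :=
    closure_minimal (essBoundary_subset_closure ω) isClosed_closure
  have hNa : N ⊆ {x | ⟪x, ν⟫ ≤ a} := by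
    refine subset_trans hNsub (closure_minimal hsub ?_)
    exact isClosed_le (continuous_id.inner continuous_const) continuous_const
  have hNnull : volume N = 0 := by
    have hsplit : N ⊆ (N ∩ {x | ⟪x, ν⟫ < a}) ∪ {x | ⟪x, ν⟫ = a} := by
      intro x hx
      have hxa : ⟪x, ν⟫ ≤ a := hNa hx
      rcases lt_or_eq_of_le hxa with h | h
      · exact Or.inl ⟨hx, h⟩
      · exact Or.inr h
    refine measure_mono_null hsplit (measure_union_null ?_ (hyperplane_null ν hν a))
    refine null_of_injective_line ν hν _
      (hNcl.measurableSet.inter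
        ((isOpen_lt (continuous_id.inner continuous_const) continuous_const).measurableSet))
      ((hbdd.closure.subset hNsub).subset inter_subset_left) ?_
    rintro x ⟨hxN, hxa⟩ t ⟨hxtN, hxta⟩
    set z := x + (a - ⟪x, ν⟫) • ν with hz
    have hza : ⟪z, ν⟫ = a := by
      rw [hz, aux_inner_add_smul hν]; ring
    have hx1 : x = z + (⟪x, ν⟫ - a) • ν := by rw [hz]; module
    have hx2 : x + t • ν = z + (⟪x, ν⟫ - a + t) • ν := by rw [hz]; module
    have hmem1 : x ∈ N ∩ {p | ∃ s : ℝ, s < 0 ∧ p = z + s • ν} := by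
      refine ⟨hxN, ⟨⟪x, ν⟫ - a, ?_, hx1⟩⟩
      simp only [mem_setOf_eq] at hxa
      linarith
    have hmem2 : x + t • ν ∈ N ∩ {p | ∃ s : ℝ, s < 0 ∧ p = z + s • ν} := by
      refine ⟨hxtN, ⟨⟪x, ν⟫ - a + t, ?_, hx2⟩⟩
      have := hxta
      simp only [mem_setOf_eq, aux_inner_add_smul hν] at this
      linarith
    have heq := hray z hza hmem1 hmem2
    have ht : t • ν = 0 := by
      have := heq
      nth_rewrite 1 [← add_zero x] at this
      exact (add_left_cancel this).symm
    rcases smul_eq_zero.1 ht with h | h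
    · exact h
    · exact absurd h hν0
  -- the open set U
  set U := {x : EuclideanSpace ℝ (Fin d) | ∃ ρ : ℝ, 0 < ρ ∧ volume (ball x ρ \ ω) = 0}
    with hU
  have hUopen : IsOpen U := by
    rw [Metric.isOpen_iff]
    rintro x ⟨ρ, hρ, h0⟩
    refine ⟨ρ / 2, half_pos hρ, ?_⟩
    intro y hy
    refine ⟨ρ / 2, half_pos hρ, ?_⟩
    refine measure_mono_null (diff_subset_diff_left ?_) h0
    intro w hw
    rw [mem_ball] at *
    calc dist w x ≤ dist w y + dist y x := dist_triangle _ _ _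
    _ < ρ / 2 + ρ / 2 := add_lt_add hw hy
    _ = ρ := by ring
  have hUnull : volume (U \ ω) = 0 := by
    refine measure_null_of_locally_null _ fun x hx => ?_
    obtain ⟨ρ, hρ, h0⟩ := hx.1
    refine ⟨(U \ ω) ∩ ball x ρ, inter_mem_nhdsWithin _ (ball_mem_nhds x hρ), ?_⟩
    refine measure_mono_null ?_ h0
    rintro w ⟨hw1, hw2⟩
    exact ⟨hw2, hw1.2⟩
  -- points of ω with locally positive measure
  set G := {x : EuclideanSpace ℝ (Fin d) | ∀ ρ : ℝ, 0 < ρ → volume (ω ∩ ball x ρ) ≠ 0}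
    with hG
  have hGnull : volume (ω \ G) = 0 := by
    refine measure_null_of_locally_null _ fun x hx => ?_
    have := hx.2
    rw [hG, mem_setOf_eq] at this
    push_neg at this
    obtain ⟨ρ, hρ, h0⟩ := this
    refine ⟨(ω \ G) ∩ ball x ρ, inter_mem_nhdsWithin _ (ball_mem_nhds x hρ), ?_⟩
    refine measure_mono_null ?_ h0
    rintro w ⟨hw1, hw2⟩
    exact ⟨hw1.1, hw2⟩
  -- conclusion
  refine ⟨U, hUopen, ?_⟩
  have homU : volume (ω \ U) = 0 := by
    have hsub2 : ω \ U ⊆ (ω \ G) ∪ N := by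
      rintro x ⟨hxω, hxU⟩
      by_cases hxG : x ∈ G
      · by_cases hxN : x ∈ N
        · exact Or.inr hxN
        · exfalso
          obtain ⟨ρ, hρ, hballN⟩ := Metric.isOpen_iff.1 hNcl.isOpen_compl x hxN
          have hdisj : ∀ y ∈ ball x ρ, y ∉ essBoundary ω := fun y hy hyb =>
            (hballN hy) (subset_closure hyb)
          rcases null_or_null_of_no_essBoundary hd ω hmeas x hρ hdisj with h | h
          · exact (hxG ρ hρ) h
          · exact hxU ⟨ρ, hρ, h⟩
      · exact Or.inl ⟨hxω, hxG⟩
    exact measure_mono_null hsub2 (measure_union_null hGnull hNnull)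
  rw [Set.symmDiff_def]
  exact measure_union_null homU hUnull
end

section
/- Let Ω ⊂ ℝ^d be a measurable set with finite Lebesgue measure which is r-critical for some r > 0 (with constant c > 0). Then Ω is essentially bounded, i.e., there exists R > 0 with |Ω \ B_R(0)| = 0. -/
open MeasureTheory Metric Filter Set
open scoped RealInnerProductSpace Topology ENNReal symmDiff

namespace Stmt11Aux

variable {d : ℕ}

local notation "E" => EuclideanSpace ℝ (Fin d)

lemma nontriv (hd : 1 ≤ d) : Nontrivial (EuclideanSpace ℝ (Fin d)) := by
  apply Module.nontrivial_of_finrank_pos (R := ℝ)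
  rw [finrank_euclideanSpace_fin]; omega

lemma vol_ball_eq (hd : 1 ≤ d) (x : E) {t : ℝ} (ht : 0 ≤ t) :
    volume (ball x t) = ENNReal.ofReal (t ^ d) * volume (ball (0 : E) 1) := by
  haveI := nontriv hd
  rw [Measure.addHaar_ball volume x ht, finrank_euclideanSpace_fin]

lemma vol_cb_eq (hd : 1 ≤ d) (x : E) (t : ℝ) :
    volume (closedBall x t) = volume (ball x t) := by
  haveI := nontriv hd
  exact Measure.addHaar_closedBall_eq_addHaar_ball volume x t

/-- Existence of a Lebesgue density point of `S` inside a set `W` where `S` has positive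
measure. -/
lemma exists_density_point {S W : Set E} (hS : MeasurableSet S)
    (hpos : volume (S ∩ W) ≠ 0) :
    ∃ p ∈ W, Tendsto (fun ρ : ℝ => volume (S ∩ closedBall p ρ) / volume (closedBall p ρ))
      (𝓝[>] 0) (𝓝 1) := by
  have hae := Besicovitch.ae_tendsto_measure_inter_div_of_measurableSet (volume : Measure E) hS
  set T : Set E := {x | Tendsto (fun ρ : ℝ =>
      volume (S ∩ closedBall x ρ) / volume (closedBall x ρ)) (𝓝[>] 0) (𝓝 1)} with hT
  have hae2 : ∀ᵐ x ∂(volume : Measure E), x ∈ S → x ∈ T := by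
    filter_upwards [hae] with x hx hxS
    simpa [hT, indicator_of_mem hxS] using hx
  have hbad : volume {x | ¬ (x ∈ S → x ∈ T)} = 0 := hae2
  have hsub : S ∩ W ⊆ (S ∩ W ∩ T) ∪ {x | ¬ (x ∈ S → x ∈ T)} := by
    intro x hx
    by_cases hxT : x ∈ T
    · exact Or.inl ⟨hx, hxT⟩
    · exact Or.inr (fun h => hxT (h hx.1))
  have : volume (S ∩ W ∩ T) ≠ 0 := by
    intro h0
    apply hpos
    refine le_antisymm ?_ zero_le
    calc volume (S ∩ W) ≤ volume ((S ∩ W ∩ T) ∪ {x | ¬ (x ∈ S → x ∈ T)}) := measure_mono hsub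
    _ ≤ volume (S ∩ W ∩ T) + volume {x | ¬ (x ∈ S → x ∈ T)} := measure_union_le _ _
    _ = 0 := by rw [h0, hbad, add_zero]
  obtain ⟨p, hp⟩ := nonempty_of_measure_ne_zero this
  exact ⟨p, hp.1.2, hp.2⟩

/-- Moving the center of a ball by at most `δ` changes the mass of `Ω` inside by at most the
mass of an annulus. -/
lemma meas_ball_move_le (Ω : Set E) {t δ : ℝ} {z z' : E} (hzz : dist z z' ≤ δ) :
    volume (Ω ∩ ball z t) ≤ volume (Ω ∩ ball z' t)
      + volume (ball z' (t + δ) \ ball z' (t - δ)) := by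
  have hsub : Ω ∩ ball z t ⊆ (Ω ∩ ball z' t) ∪ (ball z' (t + δ) \ ball z' (t - δ)) := by
    intro w ⟨hw1, hw2⟩
    by_cases h : w ∈ ball z' t
    · exact Or.inl ⟨hw1, h⟩
    · refine Or.inr ⟨?_, fun hc => h ?_⟩
      · have := dist_triangle w z z'
        rw [mem_ball] at hw2 ⊢
        linarith [hw2, hzz, this]
      · have hδ0 : 0 ≤ δ := le_trans dist_nonneg hzz
        rw [mem_ball] at hc ⊢
        linarith [hc]
  exact (measure_mono hsub).trans (measure_union_le _ _)

lemma annulus_bound (hd : 1 ≤ d) (z : E) {t δ : ℝ} (hδ : 0 ≤ δ) (hδt : δ ≤ t) :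
    volume (ball z (t + δ) \ ball z (t - δ))
      ≤ ENNReal.ofReal ((t + δ) ^ d - (t - δ) ^ d) * volume (ball (0 : E) 1) := by
  have h1 : (0:ℝ) ≤ t - δ := by linarith
  have h2 : (0:ℝ) ≤ t + δ := by linarith
  have hsub : ball z (t - δ) ⊆ ball z (t + δ) := ball_subset_ball (by linarith)
  rw [measure_diff hsub measurableSet_ball.nullMeasurableSet measure_ball_lt_top.ne]
  rw [vol_ball_eq hd z h1, vol_ball_eq hd z h2]
  have hle : (t - δ) ^ d ≤ (t + δ) ^ d := pow_le_pow_left₀ h1 (by linarith) d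
  rw [tsub_le_iff_right, ← add_mul,
    ← ENNReal.ofReal_add (sub_nonneg.2 hle) (by positivity), sub_add_cancel]

/-- Discrete intermediate value theorem. -/
lemma discrete_ivt {a : ℕ → ℝ} {m4 : ℝ} (hm4 : 0 < m4) {N : ℕ} (h0 : 3 * m4 < a 0)
    (hN : a N < m4) (hstep : ∀ k, k < N → |a (k + 1) - a k| ≤ m4) :
    ∃ k ≤ N, m4 ≤ a k ∧ a k ≤ 3 * m4 := by
  classical
  have hex : ∃ k, a k ≤ 3 * m4 := ⟨N, by linarith⟩
  set k := Nat.find hex with hk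
  have hkle : k ≤ N := Nat.find_min' hex (by linarith)
  have hak : a k ≤ 3 * m4 := Nat.find_spec hex
  have hk0 : k ≠ 0 := by
    intro h
    have := hak
    rw [h] at this
    linarith
  obtain ⟨n, hn⟩ := Nat.exists_eq_succ_of_ne_zero hk0
  have hlt : ¬ (a n ≤ 3 * m4) := Nat.find_min hex (by omega)
  push_neg at hlt
  have hnN : n < N := by omega
  have := hstep n hnN
  rw [abs_le] at this
  refine ⟨k, hkle, ?_, hak⟩
  rw [hn]
  have h1 := this.1
  linarith


/-- Federer-type step: inside a ball where both `Ω` and its complement have positive measure,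
there is an arbitrarily small sub-ball where `Ω` occupies between a quarter and
three quarters (in the weak sense of the stated inequalities) of the volume. -/
lemma federer_step (hd : 1 ≤ d) {Ω : Set E} (hmeas : MeasurableSet Ω)
    (x : E) (s t0 : ℝ) (ht0 : 0 < t0)
    (h1 : volume (Ω ∩ ball x s) ≠ 0) (h2 : volume (ball x s \ Ω) ≠ 0) :
    ∃ y t, 0 < t ∧ t ≤ t0 ∧ ball y t ⊆ ball x s ∧
      volume (ball y t) ≤ 4 * volume (Ω ∩ ball y t) ∧
      volume (ball y t) ≤ 4 * volume (ball y t \ Ω) := by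
  classical
  obtain ⟨p, hpW, hp⟩ := exists_density_point hmeas h1
  have h2' : volume (Ωᶜ ∩ ball x s) ≠ 0 := by rwa [← diff_eq_compl_inter]
  obtain ⟨q, hqW, hq⟩ := exists_density_point hmeas.compl h2'
  set s' := max (dist p x) (dist q x) with hs'
  have hps' : p ∈ closedBall x s' := mem_closedBall.2 (le_max_left _ _)
  have hqs' : q ∈ closedBall x s' := mem_closedBall.2 (le_max_right _ _)
  have hs's : s' < s := max_lt (mem_ball.1 hpW) (mem_ball.1 hqW)
  set ι := volume (ball (0 : E) 1) with hι
  have hι0 : ι ≠ 0 := (measure_ball_pos volume _ one_pos).ne'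
  have hιtop : ι ≠ ⊤ := measure_ball_lt_top.ne
  have h78lt1 : (7/8 : ℝ≥0∞) < 1 := by
    rw [ENNReal.div_lt_iff (by norm_num) (by norm_num)]; norm_num
  have h78top : (7/8 : ℝ≥0∞) ≠ ⊤ := (ENNReal.div_lt_top (by norm_num) (by norm_num)).ne
  -- choose the scale t
  have hev1 : ∀ᶠ ρ in 𝓝[>] (0:ℝ),
      (7/8 : ℝ≥0∞) < volume (Ω ∩ closedBall p ρ) / volume (closedBall p ρ) :=
    hp.eventually_const_lt h78lt1
  have hev2 : ∀ᶠ ρ in 𝓝[>] (0:ℝ),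
      (7/8 : ℝ≥0∞) < volume (Ωᶜ ∩ closedBall q ρ) / volume (closedBall q ρ) :=
    hq.eventually_const_lt h78lt1
  have hev3 : ∀ᶠ ρ in 𝓝[>] (0:ℝ), ρ < min t0 (s - s') := by
    have hmin : (0:ℝ) < min t0 (s - s') := lt_min ht0 (by linarith)
    filter_upwards [mem_nhdsWithin_of_mem_nhds (Iio_mem_nhds hmin)] with ρ hρ using hρ
  obtain ⟨t, ⟨⟨ht78p, ht78q⟩, htlt⟩, htpos⟩ :=
    (((hev1.and hev2).and hev3).and eventually_mem_nhdsWithin).exists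
  rw [mem_Ioi] at htpos
  set m := ENNReal.ofReal (t ^ d) * ι with hm
  have hball : ∀ z : E, volume (ball z t) = m := fun z => vol_ball_eq hd z htpos.le
  have hcb : ∀ z : E, volume (closedBall z t) = m := fun z => by rw [vol_cb_eq hd, hball]
  have hm0 : m ≠ 0 := by rw [← hball p]; exact (measure_ball_pos volume _ htpos).ne'
  have hmtop : m ≠ ⊤ := by rw [← hball p]; exact measure_ball_lt_top.ne
  have hsphere : ∀ z : E, volume (sphere z t) = 0 := fun z =>
    Measure.addHaar_sphere_of_ne_zero volume z htpos.ne'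
  have hcb_ball : ∀ (S : Set E) (z : E), volume (S ∩ closedBall z t) ≤ volume (S ∩ ball z t) := by
    intro S z
    calc volume (S ∩ closedBall z t) ≤ volume ((S ∩ ball z t) ∪ sphere z t) := by
          apply measure_mono
          rw [← ball_union_sphere]
          rintro w ⟨hw1, hw2 | hw2⟩
          · exact Or.inl ⟨hw1, hw2⟩
          · exact Or.inr hw2
      _ ≤ volume (S ∩ ball z t) + volume (sphere z t) := measure_union_le _ _
      _ = volume (S ∩ ball z t) := by rw [hsphere, add_zero]
  -- ENNReal mass bounds at p and q
  have hap : (7/8 : ℝ≥0∞) * m < volume (Ω ∩ ball p t) := by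
    have h := ht78p
    rw [hcb p, ENNReal.lt_div_iff_mul_lt (Or.inl hm0) (Or.inl hmtop)] at h
    exact h.trans_le (hcb_ball Ω p)
  have haqc : (7/8 : ℝ≥0∞) * m < volume (Ωᶜ ∩ ball q t) := by
    have h := ht78q
    rw [hcb q, ENNReal.lt_div_iff_mul_lt (Or.inl hm0) (Or.inl hmtop)] at h
    exact h.trans_le (hcb_ball Ωᶜ q)
  -- move to real numbers
  set mR := m.toReal with hmR
  have hmR0 : 0 < mR := ENNReal.toReal_pos hm0 hmtop
  have hfinΩ : ∀ z : E, volume (Ω ∩ ball z t) ≠ ⊤ := fun z =>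
    ((measure_mono inter_subset_right).trans_lt (by rw [hball z]; exact hmtop.lt_top)).ne
  have hfinD : ∀ z : E, volume (ball z t \ Ω) ≠ ⊤ := fun z =>
    ((measure_mono diff_subset).trans_lt (by rw [hball z]; exact hmtop.lt_top)).ne
  set aR : E → ℝ := fun z => (volume (Ω ∩ ball z t)).toReal with haR
  have hsplit : ∀ z : E, aR z + (volume (ball z t \ Ω)).toReal = mR := by
    intro z
    have h := measure_inter_add_diff (μ := volume) (ball z t) hmeas
    rw [inter_comm] at h
    have h' := congrArg ENNReal.toReal h
    rwa [ENNReal.toReal_add (hfinΩ z) (hfinD z), hball z] at h'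
  have haRle : ∀ z : E, aR z ≤ mR := fun z => by
    have := hsplit z
    have h2 := ENNReal.toReal_nonneg (a := volume (ball z t \ Ω))
    linarith
  have hapR : 7/8 * mR < aR p := by
    have := (ENNReal.toReal_lt_toReal (ENNReal.mul_ne_top h78top hmtop)
      (hfinΩ p)).2 hap
    rwa [ENNReal.toReal_mul, ENNReal.toReal_div, ENNReal.toReal_ofNat, ENNReal.toReal_ofNat]
      at this
  have haqR : aR q < mR / 8 := by
    have hc : 7/8 * mR < (volume (Ωᶜ ∩ ball q t)).toReal := by
      have hfinc : volume (Ωᶜ ∩ ball q t) ≠ ⊤ := by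
        refine ((measure_mono inter_subset_right).trans_lt ?_).ne
        rw [hball q]; exact hmtop.lt_top
      have := (ENNReal.toReal_lt_toReal (ENNReal.mul_ne_top h78top hmtop) hfinc).2 haqc
      rwa [ENNReal.toReal_mul, ENNReal.toReal_div, ENNReal.toReal_ofNat, ENNReal.toReal_ofNat]
        at this
    have hsplitq := hsplit q
    rw [diff_eq_compl_inter] at hsplitq
    linarith
  -- choose δ
  have hcont : Tendsto (fun δ : ℝ => ((t + δ) ^ d - (t - δ) ^ d) * ι.toReal) (𝓝 0) (𝓝 0) := by
    have hc : Continuous fun δ : ℝ => ((t + δ) ^ d - (t - δ) ^ d) * ι.toReal :=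
      (((continuous_const.add continuous_id).pow d).sub
        ((continuous_const.sub continuous_id).pow d)).mul continuous_const
    have h0 := hc.tendsto 0
    simpa using h0
  have hevδ : ∀ᶠ δ in 𝓝[>] (0:ℝ),
      (((t + δ) ^ d - (t - δ) ^ d) * ι.toReal < mR / 4 ∧ δ < t / 2) := by
    have e1 := hcont.eventually_lt_const (by positivity : (0:ℝ) < mR / 4)
    have e2 : ∀ᶠ δ : ℝ in 𝓝 0, δ < t / 2 := Iio_mem_nhds (by linarith)
    filter_upwards [mem_nhdsWithin_of_mem_nhds (e1.and e2)] with δ hδ using hδ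
  obtain ⟨δ, ⟨hδa, hδhalf⟩, hδpos⟩ := (hevδ.and eventually_mem_nhdsWithin).exists
  rw [mem_Ioi] at hδpos
  -- one-step continuity bound
  have hstepR : ∀ z z' : E, dist z z' ≤ δ → aR z ≤ aR z' + mR / 4 := by
    intro z z' hzz
    have h5 := meas_ball_move_le Ω (t := t) hzz
    have h6 := annulus_bound hd (t := t) (δ := δ) z' hδpos.le (by linarith)
    have hA : volume (Ω ∩ ball z t)
        ≤ volume (Ω ∩ ball z' t) + ENNReal.ofReal ((t + δ) ^ d - (t - δ) ^ d) * ι :=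
      h5.trans (add_le_add le_rfl h6)
    have hfin2 : volume (Ω ∩ ball z' t) + ENNReal.ofReal ((t + δ) ^ d - (t - δ) ^ d) * ι ≠ ⊤ :=
      ENNReal.add_ne_top.2 ⟨hfinΩ z', ENNReal.mul_ne_top ENNReal.ofReal_ne_top hιtop⟩
    have hR := (ENNReal.toReal_le_toReal (hfinΩ z) hfin2).2 hA
    have hd0 : (0:ℝ) ≤ (t + δ) ^ d - (t - δ) ^ d :=
      sub_nonneg.2 (pow_le_pow_left₀ (by linarith) (by linarith) d)
    rw [ENNReal.toReal_add (hfinΩ z') (ENNReal.mul_ne_top ENNReal.ofReal_ne_top hιtop),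
      ENNReal.toReal_mul, ENNReal.toReal_ofReal hd0] at hR
    have : ((t + δ) ^ d - (t - δ) ^ d) * ι.toReal < mR / 4 := hδa
    calc aR z ≤ aR z' + ((t + δ) ^ d - (t - δ) ^ d) * ι.toReal := hR
      _ ≤ aR z' + mR / 4 := by linarith
  -- the chain of points
  set D := dist p q with hD
  set N := ⌈D / δ⌉₊ + 1 with hN
  have hNpos : (0:ℝ) < N := by positivity
  have hDN : D / N ≤ δ := by
    rw [div_le_iff₀ hNpos]
    have h1 : D / δ ≤ (⌈D / δ⌉₊ : ℝ) := Nat.le_ceil _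
    have h2 : (⌈D / δ⌉₊ : ℝ) ≤ N - 1 := by rw [hN]; push_cast; linarith
    have : D / δ ≤ N - 1 := h1.trans h2
    have := (div_le_iff₀ hδpos).1 this
    nlinarith [dist_nonneg (x := p) (y := q)]
  set z : ℕ → E := fun k => p + ((k : ℝ) / N) • (q - p) with hz
  have hzstep : ∀ k : ℕ, dist (z k) (z (k + 1)) ≤ δ := by
    intro k
    have hdiff : z (k + 1) - z k = ((1:ℝ) / N) • (q - p) := by
      rw [hz]
      simp only
      rw [add_sub_add_left_eq_sub, ← sub_smul, div_sub_div_same]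
      congr 2
      push_cast; ring
    have : dist (z k) (z (k + 1)) = ‖z (k + 1) - z k‖ := by rw [dist_eq_norm, norm_sub_rev]
    rw [this, hdiff, norm_smul]
    have : ‖q - p‖ = D := by rw [hD, dist_eq_norm, norm_sub_rev]
    rw [this, Real.norm_eq_abs, abs_div, abs_one]
    have : |(N:ℝ)| = N := abs_of_pos hNpos
    rw [this]
    calc 1 / (N:ℝ) * D = D / N := by ring
      _ ≤ δ := hDN
  have hzW : ∀ k : ℕ, k ≤ N → z k ∈ closedBall x s' := by
    intro k hk
    have hl0 : (0:ℝ) ≤ (k : ℝ) / N := by positivity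
    have hl1 : (k : ℝ) / N ≤ 1 := by
      rw [div_le_one hNpos]; exact_mod_cast hk
    have hco : z k = (1 - (k:ℝ)/N) • p + ((k:ℝ)/N) • q := by rw [hz]; simp only; module
    rw [hco]
    exact (convex_closedBall x s') hps' hqs' (by linarith) hl0 (by ring)
  have hz0 : z 0 = p := by rw [hz]; simp
  have hzN : z N = q := by
    rw [hz]
    simp only [div_self (ne_of_gt hNpos)]
    rw [one_smul]
    abel
  -- discrete IVT
  obtain ⟨k, hkN, hk1, hk2⟩ := discrete_ivt (a := fun k => aR (z k)) (m4 := mR / 4)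
    (by positivity)
    (by show 3 * (mR / 4) < aR (z 0); rw [hz0]; linarith)
    (by show aR (z N) < mR / 4; rw [hzN]; linarith)
    (by
      intro k hk
      rw [abs_le]
      constructor
      · have := hstepR (z k) (z (k + 1)) (hzstep k)
        linarith
      · have := hstepR (z (k + 1)) (z k) (by rw [dist_comm]; exact hzstep k)
        linarith)
  refine ⟨z k, t, htpos, le_of_lt (htlt.trans_le (min_le_left _ _)), ?_, ?_, ?_⟩
  · intro w hw
    have hyx : dist (z k) x ≤ s' := mem_closedBall.1 (hzW k hkN)
    have hts : t < s - s' := htlt.trans_le (min_le_right _ _)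
    rw [mem_ball] at hw ⊢
    calc dist w x ≤ dist w (z k) + dist (z k) x := dist_triangle _ _ _
      _ < t + s' := by linarith
      _ ≤ s := by linarith
  · rw [hball]
    have h4fin : (4:ℝ≥0∞) * volume (Ω ∩ ball (z k) t) ≠ ⊤ :=
      ENNReal.mul_ne_top (by norm_num) (hfinΩ (z k))
    refine (ENNReal.toReal_le_toReal hmtop h4fin).1 ?_
    have h4 : ((4:ℝ≥0∞) * volume (Ω ∩ ball (z k) t)).toReal = 4 * aR (z k) := by
      rw [ENNReal.toReal_mul, ENNReal.toReal_ofNat]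
    rw [h4]
    show mR ≤ 4 * aR (z k)
    linarith
  · rw [hball]
    have h4fin : (4:ℝ≥0∞) * volume (ball (z k) t \ Ω) ≠ ⊤ :=
      ENNReal.mul_ne_top (by norm_num) (hfinD (z k))
    refine (ENNReal.toReal_le_toReal hmtop h4fin).1 ?_
    have h4 : ((4:ℝ≥0∞) * volume (ball (z k) t \ Ω)).toReal
        = 4 * (volume (ball (z k) t \ Ω)).toReal := by
      rw [ENNReal.toReal_mul, ENNReal.toReal_ofNat]
    rw [h4]
    show mR ≤ 4 * (volume (ball (z k) t \ Ω)).toReal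
    have := hsplit (z k)
    linarith


/-- The essential boundary of an `r`-critical set of finite measure is bounded. -/
lemma essB_bounded {Ω : Set E} (hmeas : MeasurableSet Ω) (hfin : volume Ω < ⊤)
    {r : ℝ} (hr : 0 < r) {c : ℝ≥0∞} (hc : 0 < c)
    (hcrit : ∀ x ∈ essBoundary Ω, volume (Ω ∩ ball x r) = c) :
    ∃ R : ℝ, 0 < R ∧ essBoundary Ω ⊆ ball 0 R := by
  by_contra hcon
  push_neg at hcon
  have H : ∀ R : ℝ, ∃ x, x ∈ essBoundary Ω ∧ R < ‖x‖ := by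
    intro R
    obtain ⟨x, hx, hxout⟩ := Set.not_subset.1 (hcon (max R 0 + 1) (by positivity))
    refine ⟨x, hx, ?_⟩
    rw [mem_ball, dist_zero_right] at hxout
    push_neg at hxout
    calc R ≤ max R 0 := le_max_left _ _
      _ < max R 0 + 1 := by linarith
      _ ≤ ‖x‖ := hxout
  set f : ℕ → E := fun n =>
    Nat.rec (Classical.choose (H 0)) (fun _ x => Classical.choose (H (‖x‖ + 2 * r))) n with hf
  have hfmem : ∀ n, f n ∈ essBoundary Ω := by
    intro n
    cases n with
    | zero => exact (Classical.choose_spec (H 0)).1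
    | succ k => exact (Classical.choose_spec (H (‖f k‖ + 2 * r))).1
  have hfgrow : ∀ n, ‖f n‖ + 2 * r < ‖f (n + 1)‖ := fun n =>
    (Classical.choose_spec (H (‖f n‖ + 2 * r))).2
  have hmono : ∀ n m : ℕ, n < m → ‖f n‖ + 2 * r ≤ ‖f m‖ := by
    intro n m hnm
    induction m with
    | zero => omega
    | succ k ih =>
      rcases Nat.lt_succ_iff_lt_or_eq.1 hnm with h | h
      · have h1 := hfgrow k
        have h2 := ih h
        linarith
      · subst h; exact (hfgrow n).le
  have hdisjballs : ∀ a b : ℕ, a < b → Disjoint (ball (f a) r) (ball (f b) r) := by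
    intro a b hab
    apply ball_disjoint_ball
    have h1 := hmono a b hab
    have h2 : ‖f b‖ - ‖f a‖ ≤ dist (f a) (f b) := by
      rw [dist_eq_norm, norm_sub_rev]
      exact norm_sub_norm_le _ _
    linarith
  have hdisj : Pairwise (Function.onFun Disjoint fun n : ℕ => Ω ∩ ball (f n) r) := by
    intro i j hij
    have hb : Disjoint (ball (f i) r) (ball (f j) r) := by
      rcases lt_or_gt_of_ne hij with h | h
      · exact hdisjballs i j h
      · exact (hdisjballs j i h).symm
    exact hb.mono inter_subset_right inter_subset_right
  have hU : volume (⋃ n : ℕ, Ω ∩ ball (f n) r) = ∑' n : ℕ, volume (Ω ∩ ball (f n) r) :=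
    measure_iUnion hdisj fun n => hmeas.inter measurableSet_ball
  have hsum : ∑' n : ℕ, volume (Ω ∩ ball (f n) r) = ⊤ := by
    rw [tsum_congr (fun n => hcrit _ (hfmem n))]
    exact ENNReal.tsum_const_eq_top_of_ne_zero hc.ne'
  have hcontra : (⊤ : ℝ≥0∞) ≤ volume Ω := by
    rw [← hsum, ← hU]
    exact measure_mono (iUnion_subset fun n => inter_subset_left)
  exact absurd (top_le_iff.1 hcontra) hfin.ne

theorem stmt11' (r : ℝ) (hr : 0 < r) (Ω : Set (EuclideanSpace ℝ (Fin d)))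
    (hmeas : MeasurableSet Ω) (hfin : volume Ω < ⊤)
    (c : ℝ≥0∞) (hc : 0 < c)
    (hcrit : ∀ x ∈ essBoundary Ω, volume (Ω ∩ ball x r) = c) :
    ∃ R : ℝ, 0 < R ∧ volume (Ω \ ball (0 : EuclideanSpace ℝ (Fin d)) R) = 0 := by
  rcases Nat.eq_zero_or_pos d with hd0 | hd
  · refine ⟨1, one_pos, ?_⟩
    have huniv : ball (0 : EuclideanSpace ℝ (Fin d)) 1 = univ := by
      apply eq_univ_of_forall
      intro w
      rw [mem_ball, dist_eq_norm]
      subst hd0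
      have hw : ‖w - 0‖ = 0 := by simp [EuclideanSpace.norm_eq]
      rw [hw]; norm_num
    rw [huniv, diff_univ, measure_empty]
  · by_contra hcon
    push_neg at hcon
    obtain ⟨R, hR0, hRsub⟩ := essB_bounded hmeas hfin hr hc hcrit
    haveI := nontriv hd
    set ι := volume (ball (0 : E) 1) with hι
    have hι0 : ι ≠ 0 := (measure_ball_pos volume _ one_pos).ne'
    have hιtop : ι ≠ ⊤ := measure_ball_lt_top.ne
    set ιR := ι.toReal with hιR
    have hιRpos : 0 < ιR := ENNReal.toReal_pos hι0 hιtop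
    set V := (volume Ω).toReal with hV
    have hV0 : 0 ≤ V := ENNReal.toReal_nonneg
    set ρ : ℝ := max 1 ((V + 1) / ιR) with hρ
    have hρ1 : (1 : ℝ) ≤ ρ := le_max_left _ _
    have hρ0 : (0 : ℝ) < ρ := by linarith
    have hvol : ∀ zc : E, volume Ω < volume (ball zc ρ) := by
      intro zc
      rw [vol_ball_eq hd zc hρ0.le]
      have h2 : (V + 1) / ιR ≤ ρ := le_max_right _ _
      have h3 : ρ ≤ ρ ^ d := by
        calc ρ = ρ ^ 1 := (pow_one ρ).symm
          _ ≤ ρ ^ d := pow_le_pow_right₀ hρ1 hd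
      have h4 : V + 1 ≤ ρ * ιR := (div_le_iff₀ hιRpos).1 h2
      have h5 : V < ρ ^ d * ιR := by nlinarith
      refine (ENNReal.toReal_lt_toReal hfin.ne
        (ENNReal.mul_ne_top ENNReal.ofReal_ne_top hιtop)).1 ?_
      rw [ENNReal.toReal_mul, ENNReal.toReal_ofReal (by positivity)]
      exact h5
    set M := R + 2 * ρ + 2 with hM
    obtain ⟨D0, hD0c, hD0d⟩ := TopologicalSpace.exists_countable_dense
      (EuclideanSpace ℝ (Fin d))
    have hS : volume (Ω \ ball 0 M) ≠ 0 := hcon M (by linarith)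
    have hcover : (Ω \ ball 0 M) ⊆ ⋃ z ∈ D0, (Ω \ ball 0 M) ∩ ball z ρ := by
      intro w hw
      obtain ⟨zc, hzc, hdlt⟩ := hD0d.exists_dist_lt w hρ0
      exact mem_biUnion hzc ⟨hw, mem_ball.2 hdlt⟩
    have hx0ex : ∃ z ∈ D0, volume ((Ω \ ball 0 M) ∩ ball z ρ) ≠ 0 := by
      by_contra hno
      push_neg at hno
      have h0 : volume (⋃ z ∈ D0, (Ω \ ball 0 M) ∩ ball z ρ) = 0 :=
        (measure_biUnion_null_iff hD0c).2 hno
      exact hS (measure_mono_null hcover h0)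
    obtain ⟨x₀, hx₀D, hx₀⟩ := hx0ex
    have h1 : volume (Ω ∩ ball x₀ ρ) ≠ 0 := by
      refine fun h0 => hx₀ (measure_mono_null ?_ h0)
      exact inter_subset_inter_left _ diff_subset
    have h2 : volume (ball x₀ ρ \ Ω) ≠ 0 := by
      intro h0
      have hle : volume (ball x₀ ρ) ≤ volume Ω := by
        calc volume (ball x₀ ρ) ≤ volume ((ball x₀ ρ \ Ω) ∪ Ω) := by
              apply measure_mono
              intro w hw
              by_cases hΩ : w ∈ Ω
              · exact Or.inr hΩ
              · exact Or.inl ⟨hw, hΩ⟩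
          _ ≤ volume (ball x₀ ρ \ Ω) + volume Ω := measure_union_le _ _
          _ = volume Ω := by rw [h0, zero_add]
      exact absurd (hvol x₀) (not_lt.2 hle)
    have hx₀far : M - ρ ≤ ‖x₀‖ := by
      obtain ⟨w, hw⟩ := nonempty_of_measure_ne_zero hx₀
      have hw1 : w ∉ ball (0 : E) M := hw.1.2
      rw [mem_ball, dist_zero_right] at hw1
      push_neg at hw1
      have hw2 : dist w x₀ < ρ := mem_ball.1 hw.2
      have hw3 : ‖w‖ - ‖x₀‖ ≤ dist w x₀ := by
        rw [dist_eq_norm]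
        exact norm_sub_norm_le _ _
      linarith
    set P : E × ℝ → Prop := fun w => 0 < w.2 ∧ w.2 ≤ 1 ∧ ball w.1 w.2 ⊆ ball x₀ ρ ∧
      volume (ball w.1 w.2) ≤ 4 * volume (Ω ∩ ball w.1 w.2) ∧
      volume (ball w.1 w.2) ≤ 4 * volume (ball w.1 w.2 \ Ω) with hP
    have hstart : ∃ w : E × ℝ, P w := by
      obtain ⟨y, t, h⟩ := federer_step hd hmeas x₀ ρ 1 one_pos h1 h2
      exact ⟨(y, t), h.1, h.2.1, h.2.2.1, h.2.2.2.1, h.2.2.2.2⟩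
    have hstep : ∀ w : {w : E × ℝ // P w}, ∃ w' : {w : E × ℝ // P w},
        w'.1.2 ≤ w.1.2 / 2 ∧ ball w'.1.1 w'.1.2 ⊆ ball w.1.1 w.1.2 := by
      rintro ⟨⟨y, t⟩, hPw⟩
      obtain ⟨ht0, ht1, hsub, hb1, hb2⟩ := hPw
      have hballpos : volume (ball y t) ≠ 0 := (measure_ball_pos volume y ht0).ne'
      have h1' : volume (Ω ∩ ball y t) ≠ 0 := by
        intro h0; rw [h0, mul_zero] at hb1
        exact hballpos (le_antisymm hb1 zero_le)
      have h2' : volume (ball y t \ Ω) ≠ 0 := by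
        intro h0; rw [h0, mul_zero] at hb2
        exact hballpos (le_antisymm hb2 zero_le)
      obtain ⟨y', t', h⟩ := federer_step hd hmeas y t (t / 2) (by linarith) h1' h2'
      refine ⟨⟨(y', t'), h.1, ?_, h.2.2.1.trans hsub, h.2.2.2.1, h.2.2.2.2⟩, h.2.1, h.2.2.1⟩
      have := h.2.1
      linarith
    set w0 : {w : E × ℝ // P w} := ⟨Classical.choose hstart, Classical.choose_spec hstart⟩
      with hw0
    set f : ℕ → {w : E × ℝ // P w} :=
      fun n => Nat.rec w0 (fun _ w => Classical.choose (hstep w)) n with hfdef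
    have hfs : ∀ n, ((f (n + 1)).1.2 ≤ (f n).1.2 / 2 ∧
        ball (f (n + 1)).1.1 (f (n + 1)).1.2 ⊆ ball (f n).1.1 (f n).1.2) := fun n =>
      Classical.choose_spec (hstep (f n))
    set y : ℕ → E := fun n => (f n).1.1 with hy
    set tq : ℕ → ℝ := fun n => (f n).1.2 with htq
    have hPn : ∀ n, P (f n).1 := fun n => (f n).2
    have htpos : ∀ n, 0 < tq n := fun n => (hPn n).1
    have htle : ∀ n, tq n ≤ (1 / 2) ^ n := by
      intro n
      induction n with
      | zero => simpa using (hPn 0).2.1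
      | succ k ih =>
        have h := (hfs k).1
        calc tq (k + 1) ≤ tq k / 2 := h
          _ ≤ (1 / 2) ^ k / 2 := by linarith
          _ = (1 / 2) ^ (k + 1) := by ring
    have hnest : ∀ n m : ℕ, n ≤ m → ball (y m) (tq m) ⊆ ball (y n) (tq n) := by
      intro n m hnm
      induction m with
      | zero =>
        have h0 : n = 0 := Nat.le_zero.1 hnm
        subst h0; exact subset_rfl
      | succ k ih =>
        rcases Nat.le_succ_iff_eq_or_le.mp hnm with h | h
        · subst h; exact subset_rfl
        · exact ((hfs k).2).trans (ih h)
    have hdisty : ∀ n m : ℕ, n ≤ m → dist (y m) (y n) < tq n := fun n m hnm =>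
      mem_ball.1 (hnest n m hnm (mem_ball_self (htpos m)))
    have hcauchy : CauchySeq y := by
      rw [Metric.cauchySeq_iff']
      intro ε hε
      obtain ⟨N, hN⟩ := exists_pow_lt_of_lt_one hε (by norm_num : (1 / 2 : ℝ) < 1)
      exact ⟨N, fun n hn => lt_of_lt_of_le (hdisty N n hn) ((htle N).trans hN.le)⟩
    obtain ⟨ystar, hystar⟩ := cauchySeq_tendsto_of_complete hcauchy
    have hdstar : ∀ n, dist ystar (y n) ≤ tq n := by
      intro n
      have hT : Tendsto (fun m => dist (y m) (y n)) atTop (𝓝 (dist ystar (y n))) :=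
        hystar.dist tendsto_const_nhds
      refine le_of_tendsto hT ?_
      filter_upwards [eventually_ge_atTop n] with m hm using (hdisty n m hm).le
    set ε0 : ℝ≥0∞ := (ENNReal.ofReal (2 ^ d) * 4)⁻¹ with hε0
    have hε0pos : 0 < ε0 := by
      rw [hε0, ENNReal.inv_pos]
      exact ENNReal.mul_ne_top ENNReal.ofReal_ne_top (by norm_num)
    have hsub2 : ∀ n, ball (y n) (tq n) ⊆ ball ystar (2 * tq n) := by
      intro n w hw
      rw [mem_ball] at hw ⊢
      have h1 := hdstar n
      have htri := dist_triangle w (y n) ystar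
      rw [dist_comm ystar (y n)] at h1
      linarith
    have hratio : ∀ n,
        ε0 ≤ volume (Ω ∩ ball ystar (2 * tq n)) / volume (ball ystar (2 * tq n)) ∧
        ε0 ≤ volume (Ωᶜ ∩ ball ystar (2 * tq n)) / volume (ball ystar (2 * tq n)) := by
      intro n
      have htn := htpos n
      set mn := volume (ball (y n) (tq n)) with hmn
      have hB : volume (ball ystar (2 * tq n)) = ENNReal.ofReal (2 ^ d) * mn := by
        rw [hmn, vol_ball_eq hd ystar (by linarith : (0:ℝ) ≤ 2 * tq n),
          vol_ball_eq hd (y n) htn.le, mul_pow,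
          ENNReal.ofReal_mul (by positivity : (0:ℝ) ≤ (2:ℝ) ^ d), mul_assoc]
      have hB0 : volume (ball ystar (2 * tq n)) ≠ 0 :=
        (measure_ball_pos volume _ (by linarith : (0:ℝ) < 2 * tq n)).ne'
      have hBtop : volume (ball ystar (2 * tq n)) ≠ ⊤ := measure_ball_lt_top.ne
      have hc0 : ENNReal.ofReal ((2:ℝ) ^ d) ≠ 0 := by
        rw [Ne, ENNReal.ofReal_eq_zero, not_le]
        positivity
      have hkey : ∀ A : ℝ≥0∞, mn ≤ 4 * A → ε0 * volume (ball ystar (2 * tq n)) ≤ A := by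
        intro A hA
        rw [hB, hε0, ENNReal.mul_inv (Or.inl hc0) (Or.inl ENNReal.ofReal_ne_top),
          mul_mul_mul_comm, ENNReal.inv_mul_cancel hc0 ENNReal.ofReal_ne_top, one_mul]
        have h4 : (4 : ℝ≥0∞)⁻¹ * mn = mn / 4 := by rw [div_eq_mul_inv, mul_comm]
        rw [h4, ENNReal.div_le_iff_le_mul (Or.inl (by norm_num)) (Or.inl (by norm_num))]
        rw [mul_comm] at hA
        exact hA
      constructor
      · rw [ENNReal.le_div_iff_mul_le (Or.inl hB0) (Or.inl hBtop)]
        apply hkey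
        calc mn ≤ 4 * volume (Ω ∩ ball (y n) (tq n)) := (hPn n).2.2.2.1
          _ ≤ 4 * volume (Ω ∩ ball ystar (2 * tq n)) := by
            gcongr
            exact hsub2 n
      · rw [ENNReal.le_div_iff_mul_le (Or.inl hB0) (Or.inl hBtop)]
        apply hkey
        calc mn ≤ 4 * volume (ball (y n) (tq n) \ Ω) := (hPn n).2.2.2.2
          _ ≤ 4 * volume (Ωᶜ ∩ ball ystar (2 * tq n)) := by
            gcongr
            intro w hw
            exact ⟨hw.2, hsub2 n hw.1⟩
    have ht2 : Tendsto (fun n => 2 * tq n) atTop (𝓝[>] (0 : ℝ)) := by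
      rw [tendsto_nhdsWithin_iff]
      constructor
      · have hg : Tendsto (fun n : ℕ => 2 * (1 / 2 : ℝ) ^ n) atTop (𝓝 0) := by
          simpa using (tendsto_pow_atTop_nhds_zero_of_lt_one (by norm_num : (0:ℝ) ≤ 1/2)
            (by norm_num : (1/2:ℝ) < 1)).const_mul 2
        refine squeeze_zero (fun n => by linarith [htpos n]) (fun n => ?_) hg
        have := htle n
        linarith
      · exact Eventually.of_forall fun n => mem_Ioi.2 (by linarith [htpos n])
    have hpos1 : posUpperDensity Ω ystar := by
      show 0 < Filter.limsup _ _
      refine lt_of_lt_of_le hε0pos (le_limsup_of_frequently_le' ?_)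
      exact ht2.frequently (Frequently.of_forall fun n => (hratio n).1)
    have hpos2 : posUpperDensity Ωᶜ ystar := by
      show 0 < Filter.limsup _ _
      refine lt_of_lt_of_le hε0pos (le_limsup_of_frequently_le' ?_)
      exact ht2.frequently (Frequently.of_forall fun n => (hratio n).2)
    have hmem : ystar ∈ essBoundary Ω := ⟨hpos1, hpos2⟩
    have hin := hRsub hmem
    rw [mem_ball, dist_zero_right] at hin
    have hy0 : dist (y 0) x₀ < ρ := mem_ball.1 ((hPn 0).2.2.1 (mem_ball_self (htpos 0)))
    have hds : dist ystar x₀ ≤ 1 + ρ := by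
      have h1 := hdstar 0
      have h2 := htle 0
      have h3 := dist_triangle ystar (y 0) x₀
      norm_num at h2
      linarith
    have hlow : ‖x₀‖ - ‖ystar‖ ≤ dist ystar x₀ := by
      rw [dist_comm, dist_eq_norm]
      exact norm_sub_norm_le _ _
    rw [hM] at hx₀far
    linarith


end Stmt11Aux

/-- An `r`-critical measurable set of finite Lebesgue measure is essentially bounded:
there is `R > 0` such that `|Ω \ B_R(0)| = 0`. -/
theorem stmt11 {d : ℕ} (r : ℝ) (hr : 0 < r) (Ω : Set (EuclideanSpace ℝ (Fin d)))
    (hmeas : MeasurableSet Ω) (hfin : volume Ω < ⊤)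
    (c : ℝ≥0∞) (hc : 0 < c)
    (hcrit : ∀ x ∈ essBoundary Ω, volume (Ω ∩ ball x r) = c) :
    ∃ R : ℝ, 0 < R ∧ volume (Ω \ ball (0 : EuclideanSpace ℝ (Fin d)) R) = 0 := by
  exact Stmt11Aux.stmt11' r hr Ω hmeas hfin c hc hcrit
end
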